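/- arXiv:1601.00065 — 2 statements merged into one kernel-verified Lean document; each statement's English description precedes it below -/
import Mathlib

section
/- The complete bipartite graph K_{3,3} is not planar: K_{3,3} is not a subcomplex of any triangulation of the 2-sphere. -/
/-- A (finite, abstract) simplicial complex: a finite family of nonempty finite
vertex sets (faces), closed under passing to nonempty subsets. -/
def SC (K : Finset (Finset ℕ)) : Prop :=
  ∅ ∉ K ∧ ∀ s ∈ K, ∀ t : Finset ℕ, t ⊆ s → t ≠ ∅ → t ∈ K

/-- `fv K i` is the number of `i`-dimensional faces of `K` (faces with `i+1` vertices). -/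
def fv (K : Finset (Finset ℕ)) (i : ℕ) : ℕ :=
  (K.filter (fun s => s.card = i + 1)).card

/-- The link of a vertex `v` in `K`. -/
def link (K : Finset (Finset ℕ)) (v : ℕ) : Finset (Finset ℕ) :=
  K.filter (fun s => v ∉ s ∧ insert v s ∈ K)

/-- The `n`-cycle complex on the vertices `g 0, …, g (n-1)` (in this cyclic order). -/
def cycleOn (n : ℕ) (g : ℕ → ℕ) : Finset (Finset ℕ) :=
  (Finset.range n).image (fun i => ({g i} : Finset ℕ)) ∪
    (Finset.range n).image (fun i => ({g i, g ((i + 1) % n)} : Finset ℕ))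

/-- `C` is an `n`-cycle for some `n ≥ 3`. -/
def IsCycleComplex (C : Finset (Finset ℕ)) : Prop :=
  ∃ n g, 3 ≤ n ∧ Set.InjOn g (Set.Iio n) ∧ C = cycleOn n g

/-- The path complex on the vertices `g 0, …, g (n-1)` (in this order). -/
def pathOn (n : ℕ) (g : ℕ → ℕ) : Finset (Finset ℕ) :=
  (Finset.range n).image (fun i => ({g i} : Finset ℕ)) ∪
    (Finset.range (n - 1)).image (fun i => ({g i, g (i + 1)} : Finset ℕ))

/-- `C` is a path with at least one edge. -/
def IsPathComplex (C : Finset (Finset ℕ)) : Prop :=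
  ∃ n g, 2 ≤ n ∧ Set.InjOn g (Set.Iio n) ∧ C = pathOn n g

/-- Connectedness of a complex: any two vertices are joined by an edge path. -/
def Conn (K : Finset (Finset ℕ)) : Prop :=
  ∀ u v : ℕ, ({u} : Finset ℕ) ∈ K → ({v} : Finset ℕ) ∈ K →
    Relation.ReflTransGen (fun a b => ({a, b} : Finset ℕ) ∈ K) u v

/-- A triangulated closed (connected) 2-manifold: a nonempty connected 2-dimensional
simplicial complex in which the link of every vertex is a cycle. -/
def Surface2 (K : Finset (Finset ℕ)) : Prop :=
  SC K ∧ K ≠ ∅ ∧ (∀ s ∈ K, s.card ≤ 3) ∧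
    (∀ v : ℕ, ({v} : Finset ℕ) ∈ K → IsCycleComplex (link K v)) ∧ Conn K

/-- Neighbourly: any two vertices form an edge. -/
def Neighbourly (K : Finset (Finset ℕ)) : Prop :=
  ∀ u v : ℕ, ({u} : Finset ℕ) ∈ K → ({v} : Finset ℕ) ∈ K → u ≠ v →
    ({u, v} : Finset ℕ) ∈ K

/-- A triangulation of the 2-sphere: a triangulated closed connected 2-manifold
with Euler characteristic 2. -/
def TriS2 (K : Finset (Finset ℕ)) : Prop :=
  Surface2 K ∧ fv K 0 + fv K 2 = fv K 1 + 2

/-- The simplicial complex generated by a family of faces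
(all nonempty subsets of the given faces). -/
def sclosure (ts : Finset (Finset ℕ)) : Finset (Finset ℕ) :=
  ts.biUnion (fun t => t.powerset.erase ∅)

/-- `K` is isomorphic to `L` via a vertex relabelling. -/
def IsoTo (K L : Finset (Finset ℕ)) : Prop :=
  ∃ g : ℕ → ℕ, Function.Injective g ∧ K.image (Finset.image g) = L

/-- Boundary complex of the tetrahedron: all proper nonempty subsets of {0,1,2,3}. -/
def TetraB : Finset (Finset ℕ) :=
  sclosure {{0, 1, 2}, {0, 1, 3}, {0, 2, 3}, {1, 2, 3}}

/-- The complete bipartite graph `K₃,₃`, as a 1-dimensional simplicial complex with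
parts `{0,1,2}` and `{3,4,5}`. -/
def K33 : Finset (Finset ℕ) :=
  sclosure {{0, 3}, {0, 4}, {0, 5}, {1, 3}, {1, 4}, {1, 5}, {2, 3}, {2, 4}, {2, 5}}

open Finset Relation

section Basics
variable {K : Finset (Finset ℕ)}

lemma sc_mem (hK : SC K) {s t : Finset ℕ} (hs : s ∈ K) (hts : t ⊆ s) (ht : t ≠ ∅) : t ∈ K :=
  hK.2 s hs t hts ht

lemma sc_singleton (hK : SC K) {s} (hs : s ∈ K) {v} (hv : v ∈ s) : ({v} : Finset ℕ) ∈ K :=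
  sc_mem hK hs (by simpa using hv) (by simp)

lemma mem_cycleOn {n : ℕ} {g : ℕ → ℕ} {s : Finset ℕ} :
    s ∈ cycleOn n g ↔ (∃ i < n, s = {g i}) ∨ (∃ i < n, s = {g i, g ((i+1)%n)}) := by
  simp only [cycleOn, Finset.mem_union, Finset.mem_image, Finset.mem_range]
  constructor
  · rintro (⟨i, hi, rfl⟩ | ⟨i, hi, rfl⟩)
    · exact Or.inl ⟨i, hi, rfl⟩
    · exact Or.inr ⟨i, hi, rfl⟩
  · rintro (⟨i, hi, rfl⟩ | ⟨i, hi, rfl⟩)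
    · exact Or.inl ⟨i, hi, rfl⟩
    · exact Or.inr ⟨i, hi, rfl⟩

lemma mem_link {u : ℕ} {s : Finset ℕ} : s ∈ link K u ↔ s ∈ K ∧ u ∉ s ∧ insert u s ∈ K := by
  simp [link]

lemma singleton_mem_link (hK : SC K) {u x : ℕ} :
    ({x} : Finset ℕ) ∈ link K u ↔ x ≠ u ∧ ({u, x} : Finset ℕ) ∈ K := by
  rw [mem_link]
  constructor
  · rintro ⟨h1, h2, h3⟩
    refine ⟨fun h => h2 (by simp [h]), by simpa using h3⟩
  · rintro ⟨h1, h2⟩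
    refine ⟨sc_singleton hK h2 (by simp), by simp [Ne.symm h1], by simpa using h2⟩
end Basics

/-- Bundled data of a cyclic link at a vertex `u`. -/
structure LinkData (K : Finset (Finset ℕ)) (u : ℕ) where
  n : ℕ
  h : ℕ → ℕ
  hn : 3 ≤ n
  hinj : Set.InjOn h (Set.Iio n)
  heq : link K u = cycleOn n h

namespace LinkData

variable {K : Finset (Finset ℕ)} {u : ℕ} (L : LinkData K u)

/-- the `j`-th edge of the link cycle -/
def E (j : ℕ) : Finset ℕ := {L.h j, L.h ((j+1) % L.n)}

/-- the `j`-th triangle at `u` -/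
def T (j : ℕ) : Finset ℕ := insert u (L.E j)

lemma npos : 0 < L.n := by have := L.hn; omega

lemma h_inj {i j : ℕ} (hi : i < L.n) (hj : j < L.n) (hij : L.h i = L.h j) : i = j :=
  L.hinj (by exact hi) (by exact hj) hij

lemma succ_lt {j : ℕ} : (j+1) % L.n < L.n := Nat.mod_lt _ L.npos

/-- index of predecessor edge -/
def pred (j : ℕ) : ℕ := (j + L.n - 1) % L.n

lemma pred_lt {j : ℕ} : L.pred j < L.n := Nat.mod_lt _ L.npos

lemma pred_succ {j : ℕ} (hj : j < L.n) : (L.pred j + 1) % L.n = j := by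
  have hn := L.hn
  unfold pred
  rw [Nat.mod_add_mod]
  have : j + L.n - 1 + 1 = j + L.n := by omega
  rw [this, Nat.add_mod_right, Nat.mod_eq_of_lt hj]

lemma succ_pred {j : ℕ} (hj : j < L.n) : L.pred ((j+1) % L.n) = j := by
  have hn := L.hn
  unfold pred
  rw [show (j+1) % L.n + L.n - 1 = (j+1) % L.n + (L.n - 1) by omega, Nat.mod_add_mod,
    show j + 1 + (L.n - 1) = j + L.n by omega, Nat.add_mod_right, Nat.mod_eq_of_lt hj]

lemma pred_ne {j : ℕ} (hj : j < L.n) : L.pred j ≠ j := by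
  intro hEq
  have := L.pred_succ hj
  rw [hEq] at this
  have hn := L.hn
  rcases Nat.lt_or_ge (j+1) L.n with h | h
  · rw [Nat.mod_eq_of_lt h] at this; omega
  · have : (j+1) % L.n = 0 := by
      have : j + 1 = L.n := by omega
      simp [this]
    omega
end LinkData

namespace LinkData
variable {K : Finset (Finset ℕ)} {u : ℕ} (L : LinkData K u)

lemma succ_mod {j : ℕ} (hj : j < L.n) : (j+1) % L.n = if j + 1 = L.n then 0 else j + 1 := by
  split
  next h => simp [h]
  next h => exact Nat.mod_eq_of_lt (by omega)

/-- vertices of the link are exactly the `h i` -/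
lemma vert_iff {x : ℕ} : ({x} : Finset ℕ) ∈ link K u ↔ ∃ i < L.n, x = L.h i := by
  rw [L.heq, mem_cycleOn]
  constructor
  · rintro (⟨i, hi, hs⟩ | ⟨i, hi, hs⟩)
    · exact ⟨i, hi, by simpa using hs⟩
    · -- {x} = {h i, h (i+1 % n)} forces both equal x
      have h1 : L.h i = x := by
        have hmm : L.h i ∈ ({x} : Finset ℕ) := by rw [hs]; simp
        simpa using hmm
      exact ⟨i, hi, h1.symm⟩
  · rintro ⟨i, hi, rfl⟩
    exact Or.inl ⟨i, hi, rfl⟩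

lemma E_card {j : ℕ} (hj : j < L.n) : (L.E j).card = 2 := by
  have hne : L.h j ≠ L.h ((j+1) % L.n) := by
    intro hEq
    have hh := L.h_inj hj L.succ_lt hEq
    have hn := L.hn
    rw [L.succ_mod hj] at hh
    split_ifs at hh <;> omega
  simp [E, Finset.card_insert_of_notMem, hne]

lemma edge_iff {s : Finset ℕ} : (s ∈ link K u ∧ s.card = 2) ↔ ∃ j < L.n, s = L.E j := by
  constructor
  · rintro ⟨hs, hcard⟩
    rw [L.heq, mem_cycleOn] at hs
    rcases hs with ⟨i, hi, rfl⟩ | ⟨i, hi, rfl⟩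
    · simp at hcard
    · exact ⟨i, hi, rfl⟩
  · rintro ⟨j, hj, rfl⟩
    refine ⟨?_, L.E_card hj⟩
    rw [L.heq, mem_cycleOn]
    exact Or.inr ⟨j, hj, rfl⟩

lemma E_mem_link {j : ℕ} (hj : j < L.n) : L.E j ∈ link K u :=
  (L.edge_iff.2 ⟨j, hj, rfl⟩).1

lemma u_not_mem_E {j : ℕ} (hj : j < L.n) : u ∉ L.E j :=
  (mem_link.1 (L.E_mem_link hj)).2.1

lemma u_ne_h {i : ℕ} (hi : i < L.n) : u ≠ L.h i := by
  have := L.u_not_mem_E (j := i) hi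
  intro h; exact this (by simp [E, h])

lemma E_inj {i j : ℕ} (hi : i < L.n) (hj : j < L.n) (hEq : L.E i = L.E j) : i = j := by
  have hmem : L.h i ∈ L.E j := by rw [← hEq]; simp [E]
  have hmem' : L.h ((i+1) % L.n) ∈ L.E j := by rw [← hEq]; simp [E]
  have hn := L.hn
  simp only [E, Finset.mem_insert, Finset.mem_singleton] at hmem hmem'
  -- translate to index equalities
  rcases hmem with h1 | h1 <;> rcases hmem' with h2 | h2
  · exact L.h_inj hi hj h1
  · -- h i = h j and h (i+1) = h (j+1): first gives it
    exact L.h_inj hi hj h1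
  · -- h i = h (j+1), h (i+1) = h j
    have e1 : i = (j+1) % L.n := L.h_inj hi L.succ_lt h1
    have e2 : (i+1) % L.n = j := L.h_inj L.succ_lt hj h2
    -- then (j+2) % n = j, contradiction with n ≥ 3
    exfalso
    have hn := L.hn
    rw [e1, Nat.mod_add_mod] at e2
    rcases Nat.lt_trichotomy (j+2) L.n with h | h | h
    · rw [show j+1+1 = j+2 from rfl, Nat.mod_eq_of_lt h] at e2; omega
    · rw [show j+1+1 = L.n by omega, Nat.mod_self] at e2; omega
    · rw [show j+1+1 = L.n + 1 by omega, Nat.add_mod_left, Nat.mod_eq_of_lt (by omega)] at e2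
      omega
  · -- h (i+1) = h (j+1)
    have hh := L.h_inj L.succ_lt L.succ_lt h2
    have hn := L.hn
    rw [L.succ_mod hi, L.succ_mod hj] at hh
    split_ifs at hh <;> omega

/-- which edges contain the vertex `h i` -/
lemma h_mem_E_iff {i j : ℕ} (hi : i < L.n) (hj : j < L.n) :
    L.h i ∈ L.E j ↔ j = i ∨ j = L.pred i := by
  constructor
  · intro hm
    simp only [E, Finset.mem_insert, Finset.mem_singleton] at hm
    rcases hm with h1 | h1
    · exact Or.inl (L.h_inj hi hj h1).symm
    · right
      have hh : (j+1) % L.n = i := L.h_inj L.succ_lt hi h1.symm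
      rw [← hh, L.succ_pred hj]
  · rintro (rfl | rfl)
    · simp [E]
    · have : (L.pred i + 1) % L.n = i := L.pred_succ hi
      simp [E, this]

end LinkData

namespace LinkData
variable {K : Finset (Finset ℕ)} {u : ℕ} (L : LinkData K u)

lemma T_mem {j : ℕ} (hj : j < L.n) : L.T j ∈ K :=
  (mem_link.1 (L.E_mem_link hj)).2.2

lemma u_mem_T {j : ℕ} : u ∈ L.T j := Finset.mem_insert_self _ _

lemma T_card {j : ℕ} (hj : j < L.n) : (L.T j).card = 3 := by
  rw [T, Finset.card_insert_of_notMem (L.u_not_mem_E hj), L.E_card hj]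

lemma T_erase {j : ℕ} (hj : j < L.n) : (L.T j).erase u = L.E j :=
  Finset.erase_insert (L.u_not_mem_E hj)

lemma T_inj {i j : ℕ} (hi : i < L.n) (hj : j < L.n) (hEq : L.T i = L.T j) : i = j := by
  apply L.E_inj hi hj
  rw [← L.T_erase hi, ← L.T_erase hj, hEq]

lemma tri_eq_T (hK : SC K) {t : Finset ℕ} (ht : t ∈ K) (hc : t.card = 3) (hu : u ∈ t) :
    ∃ j < L.n, t = L.T j := by
  set s := t.erase u with hs
  have hcard : s.card = 2 := by rw [hs, Finset.card_erase_of_mem hu, hc]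
  have hins : insert u s = t := Finset.insert_erase hu
  have hsK : s ∈ K := sc_mem hK ht (Finset.erase_subset _ _)
    (by intro h; rw [h] at hcard; simp at hcard)
  have hlink : s ∈ link K u := mem_link.2 ⟨hsK, Finset.notMem_erase _ _, by rw [hins]; exact ht⟩
  obtain ⟨j, hj, hEj⟩ := L.edge_iff.1 ⟨hlink, hcard⟩
  exact ⟨j, hj, by rw [← hins, hEj]; rfl⟩

lemma h_mem_T_iff {i j : ℕ} (hi : i < L.n) (hj : j < L.n) :
    L.h i ∈ L.T j ↔ j = i ∨ j = L.pred i := by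
  have hne : L.h i ≠ u := (L.u_ne_h hi).symm
  rw [T, Finset.mem_insert, ← L.h_mem_E_iff hi hj]
  simp [hne]

lemma tri_pair_iff (hK : SC K) {j : ℕ} (hj : j < L.n) {t : Finset ℕ} :
    (t ∈ K ∧ t.card = 3 ∧ ({u, L.h j} : Finset ℕ) ⊆ t) ↔ (t = L.T (L.pred j) ∨ t = L.T j) := by
  constructor
  · rintro ⟨ht, hc, hsub⟩
    obtain ⟨j', hj', rfl⟩ := L.tri_eq_T hK ht hc (hsub (by simp))
    have hmem : L.h j ∈ L.T j' := hsub (by simp)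
    rcases (L.h_mem_T_iff hj hj').1 hmem with h | h
    · exact Or.inr (by rw [h])
    · exact Or.inl (by rw [h])
  · rintro (rfl | rfl)
    · refine ⟨L.T_mem L.pred_lt, L.T_card L.pred_lt, ?_⟩
      intro x hx
      simp only [Finset.mem_insert, Finset.mem_singleton] at hx
      rcases hx with rfl | rfl
      · exact L.u_mem_T
      · exact (L.h_mem_T_iff hj L.pred_lt).2 (Or.inr rfl)
    · refine ⟨L.T_mem hj, L.T_card hj, ?_⟩
      intro x hx
      simp only [Finset.mem_insert, Finset.mem_singleton] at hx
      rcases hx with rfl | rfl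
      · exact L.u_mem_T
      · exact (L.h_mem_T_iff hj hj).2 (Or.inl rfl)

lemma T_pred_ne {j : ℕ} (hj : j < L.n) : L.T (L.pred j) ≠ L.T j :=
  fun hEq => L.pred_ne hj (L.T_inj L.pred_lt hj hEq)

end LinkData

/-- extract link data from a surface -/
noncomputable def LD {K : Finset (Finset ℕ)} (hS : Surface2 K) {u : ℕ}
    (hu : ({u} : Finset ℕ) ∈ K) : LinkData K u :=
  let h1 := hS.2.2.2.1 u hu
  ⟨h1.choose, h1.choose_spec.choose, h1.choose_spec.choose_spec.1,
    h1.choose_spec.choose_spec.2.1, h1.choose_spec.choose_spec.2.2⟩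

section TwoTri
variable {K : Finset (Finset ℕ)}

open Classical in
lemma two_triangles (hS : Surface2 K) {e : Finset ℕ} (he : e ∈ K) (hc : e.card = 2) :
    ∃ t1 t2 : Finset ℕ, t1 ≠ t2 ∧
      K.filter (fun t => t.card = 3 ∧ e ⊆ t) = {t1, t2} := by
  obtain ⟨u, v, huv, rfl⟩ := Finset.card_eq_two.1 hc
  have hK : SC K := hS.1
  have hu : ({u} : Finset ℕ) ∈ K := sc_singleton hK he (by simp)
  set L := LD hS hu with hL
  have hv : ({v} : Finset ℕ) ∈ link K u := (singleton_mem_link hK).2 ⟨Ne.symm huv, he⟩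
  obtain ⟨i, hi, rfl⟩ := L.vert_iff.1 hv
  refine ⟨L.T (L.pred i), L.T i, L.T_pred_ne hi, ?_⟩
  ext t
  simp only [Finset.mem_filter, Finset.mem_insert, Finset.mem_singleton]
  rw [and_assoc.symm]
  constructor
  · rintro ⟨⟨ht, hc3⟩, hsub⟩
    exact (L.tri_pair_iff hK hi).1 ⟨ht, hc3, hsub⟩
  · intro h
    obtain ⟨h1, h2, h3⟩ := (L.tri_pair_iff hK hi).2 h
    exact ⟨⟨h1, h2⟩, h3⟩

end TwoTri

/-! ### K33 edge data -/

lemma pair_eq_pair {α : Type*} [DecidableEq α] {a b c d : α} :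
    ({a, b} : Finset α) = {c, d} ↔ (a = c ∧ b = d) ∨ (a = d ∧ b = c) := by
  constructor
  · intro h
    have ha : a ∈ ({c, d} : Finset α) := by rw [← h]; simp
    have hb : b ∈ ({c, d} : Finset α) := by rw [← h]; simp
    have hc : c ∈ ({a, b} : Finset α) := by rw [h]; simp
    have hd : d ∈ ({a, b} : Finset α) := by rw [h]; simp
    simp only [Finset.mem_insert, Finset.mem_singleton] at ha hb hc hd
    rcases ha with rfl | rfl <;> rcases hb with rfl | rfl
    · rcases hd with rfl | rfl <;> tauto
    · tauto
    · tauto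
    · rcases hc with rfl | rfl <;> tauto
  · rintro (⟨rfl, rfl⟩ | ⟨rfl, rfl⟩)
    · rfl
    · exact Finset.pair_comm _ _

def P9 : Finset (ℕ × ℕ) := {(0,3),(0,4),(0,5),(1,3),(1,4),(1,5),(2,3),(2,4),(2,5)}

section EGfacts
variable (g : ℕ → ℕ)

/-- the image edges of `K33` under `g` -/
def EG : Finset (Finset ℕ) := P9.image (fun p => ({g p.1, g p.2} : Finset ℕ))

variable {g}
variable (hg : Function.Injective g)

lemma mem_EG {e : Finset ℕ} : e ∈ EG g ↔ ∃ p ∈ P9, e = ({g p.1, g p.2} : Finset ℕ) := by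
  simp only [EG, Finset.mem_image]
  constructor
  · rintro ⟨p, hp, rfl⟩; exact ⟨p, hp, rfl⟩
  · rintro ⟨p, hp, rfl⟩; exact ⟨p, hp, rfl⟩

include hg in
lemma gpair_eq {a b c d : ℕ} :
    ({g a, g b} : Finset ℕ) = {g c, g d} ↔ (a = c ∧ b = d) ∨ (a = d ∧ b = c) := by
  rw [pair_eq_pair]
  simp [hg.eq_iff]

include hg in
lemma EG_card : (EG g).card = 9 := by
  rw [EG, Finset.card_image_of_injOn, show P9.card = 9 by decide]
  intro p hp q hq hpq
  have h2 := (gpair_eq hg).1 hpq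
  have hd : ∀ p ∈ P9, ∀ q ∈ P9, ((p.1 = q.1 ∧ p.2 = q.2) ∨ (p.1 = q.2 ∧ p.2 = q.1)) → p = q := by
    decide
  exact hd p hp q hq h2

include hg in
lemma EG_card_two {e : Finset ℕ} (he : e ∈ EG g) : e.card = 2 := by
  obtain ⟨p, hp, rfl⟩ := (mem_EG).1 he
  have hq : ∀ q ∈ P9, q.1 ≠ q.2 := by decide
  rw [Finset.card_pair (by simp [hg.eq_iff]; exact hq p hp)]

lemma EG_sub_K33img {e : Finset ℕ} (he : e ∈ EG g) : e ∈ K33.image (Finset.image g) := by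
  obtain ⟨p, hp, rfl⟩ := (mem_EG).1 he
  have hq : ∀ q ∈ P9, ({q.1, q.2} : Finset ℕ) ∈ K33 := by decide
  exact Finset.mem_image.2 ⟨({p.1, p.2} : Finset ℕ), hq p hp, by simp⟩

/-- endpoints of G-edges are g-vertices -/
lemma EG_endpoints {e : Finset ℕ} (he : e ∈ EG g) {w : ℕ} (hw : w ∈ e) : ∃ k < 6, w = g k := by
  obtain ⟨p, hp, rfl⟩ := (mem_EG).1 he
  simp only [Finset.mem_insert, Finset.mem_singleton] at hw
  have h1 : ∀ q ∈ P9, q.1 < 6 ∧ q.2 < 6 := by decide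
  rcases hw with rfl | rfl
  · exact ⟨p.1, (h1 p hp).1, rfl⟩
  · exact ⟨p.2, (h1 p hp).2, rfl⟩

include hg in
/-- each G-edge contains exactly one of `g 0, g 1, g 2` -/
lemma EG_part {e : Finset ℕ} (he : e ∈ EG g) :
    ∃ a < 3, g a ∈ e ∧ ∀ b < 3, g b ∈ e → b = a := by
  obtain ⟨p, hp, rfl⟩ := (mem_EG).1 he
  have h1 : ∀ q ∈ P9, q.1 < 3 ∧ 3 ≤ q.2 := by decide
  refine ⟨p.1, (h1 p hp).1, by simp, ?_⟩
  intro b hb hbmem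
  simp only [Finset.mem_insert, Finset.mem_singleton, hg.eq_iff] at hbmem
  have := (h1 p hp).2
  omega

include hg in
/-- a second G-edge at any endpoint of a G-edge -/
lemma EG_second {e : Finset ℕ} (he : e ∈ EG g) {x u : ℕ} (hxu : e = ({u, x} : Finset ℕ)) :
    ∃ w, w ≠ x ∧ w ≠ u ∧ ({u, w} : Finset ℕ) ∈ EG g := by
  obtain ⟨p, hp, hpe⟩ := (mem_EG).1 he
  have hu : u ∈ e := by rw [hxu]; simp
  have hx : x ∈ e := by rw [hxu]; simp
  obtain ⟨k, hk, rfl⟩ := EG_endpoints he hu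
  obtain ⟨l, hl, rfl⟩ := EG_endpoints he hx
  rw [hxu] at hpe
  have hc := (gpair_eq hg).1 hpe
  have hkl9 : (k, l) ∈ P9 ∨ (l, k) ∈ P9 := by
    rcases hc with ⟨h1, h2⟩ | ⟨h1, h2⟩
    · left; rw [h1, h2]; simpa using hp
    · right; rw [h1, h2]; simpa using hp
  have key2 : ∀ k' ∈ Finset.range 6, ∀ l' ∈ Finset.range 6, ((k',l') ∈ P9 ∨ (l',k') ∈ P9) →
      ∃ w ∈ Finset.range 6, w ≠ l' ∧ w ≠ k' ∧ ((k',w) ∈ P9 ∨ (w,k') ∈ P9) := by decide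
  obtain ⟨w, _, hwl, hwk, hwP⟩ := key2 k (Finset.mem_range.2 hk) l (Finset.mem_range.2 hl) hkl9
  refine ⟨g w, fun h => hwl (hg h), fun h => hwk (hg h), ?_⟩
  rcases hwP with h | h
  · exact mem_EG.2 ⟨(k, w), h, rfl⟩
  · exact mem_EG.2 ⟨(w, k), h, by rw [Finset.pair_comm]⟩

end EGfacts

attribute [irreducible] EG

/-! ### Main setup: triangle classes -/

def TriK (K : Finset (Finset ℕ)) : Finset (Finset ℕ) :=
  K.filter (fun t => t.card = 3)

def EHset (K : Finset (Finset ℕ)) (g : ℕ → ℕ) : Finset (Finset ℕ) :=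
  K.filter (fun e => e.card = 2) \ EG g

def TT (K : Finset (Finset ℕ)) := {t : Finset ℕ // t ∈ TriK K}

instance (K : Finset (Finset ℕ)) : Fintype (TT K) := by
  unfold TT; infer_instance

def relH (K : Finset (Finset ℕ)) (g : ℕ → ℕ) : TT K → TT K → Prop :=
  fun a b => ∃ e ∈ EHset K g, e ⊆ a.1 ∧ e ⊆ b.1

lemma relH_symm {K g} : Symmetric (relH K g) := by
  rintro a b ⟨e, he, h1, h2⟩; exact ⟨e, he, h2, h1⟩

def stH (K : Finset (Finset ℕ)) (g : ℕ → ℕ) : Setoid (TT K) :=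
  ⟨Relation.ReflTransGen (relH K g),
    fun _ => Relation.ReflTransGen.refl,
    fun h => (@Relation.ReflTransGen.stdSymm _ _ ⟨fun _ _ h => relH_symm h⟩).symm _ _ h,
    fun h1 h2 => Relation.ReflTransGen.trans h1 h2⟩

def QQ (K : Finset (Finset ℕ)) (g : ℕ → ℕ) := Quotient (stH K g)

noncomputable instance (K : Finset (Finset ℕ)) (g : ℕ → ℕ) : Fintype (QQ K g) := by
  unfold QQ
  exact @Quotient.fintype _ _ (stH K g) (fun _ _ => Classical.dec _)

section MainCtx

variable {K : Finset (Finset ℕ)} {g : ℕ → ℕ}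

/-- class map -/
noncomputable def clm (hne : (TriK K).Nonempty) (g : ℕ → ℕ) : Finset ℕ → QQ K g :=
  fun t => if h : t ∈ TriK K then (⟦⟨t, h⟩⟧ : Quotient (stH K g))
    else ⟦⟨hne.choose, hne.choose_spec⟩⟧

lemma clm_mk (hne : (TriK K).Nonempty) {t : Finset ℕ} (ht : t ∈ TriK K) :
    clm hne g t = (⟦⟨t, ht⟩⟧ : Quotient (stH K g)) := by
  simp [clm, ht]
  rfl

lemma mem_TriK {t : Finset ℕ} : t ∈ TriK K ↔ t ∈ K ∧ t.card = 3 := by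
  simp [TriK]

lemma mem_EHset {e : Finset ℕ} :
    e ∈ EHset K g ↔ e ∈ K ∧ e.card = 2 ∧ e ∉ EG g := by
  simp [EHset, and_assoc]

/-- crossing a non-G edge keeps the class -/
lemma clm_eq_of_EH (hne : (TriK K).Nonempty) {e t t' : Finset ℕ} (he : e ∈ EHset K g)
    (ht : t ∈ TriK K) (ht' : t' ∈ TriK K) (h1 : e ⊆ t) (h2 : e ⊆ t') :
    clm hne g t = clm hne g t' := by
  rw [clm_mk hne ht, clm_mk hne ht']
  exact Quotient.sound (Relation.ReflTransGen.single ⟨e, he, h1, h2⟩)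

variable (hK : TriS2 K) (hg : Function.Injective g)
  (hsub : K33.image (Finset.image g) ⊆ K)

include hK hsub in
lemma EG_sub_K : EG g ⊆ K := fun e he => hsub (EG_sub_K33img he)

include hK hsub in
lemma gvert_mem {k : ℕ} (hk : k < 6) : ({g k} : Finset ℕ) ∈ K := by
  apply hsub
  refine Finset.mem_image.2 ⟨({k} : Finset ℕ), ?_, by simp⟩
  have : ∀ k' ∈ Finset.range 6, ({k'} : Finset ℕ) ∈ K33 := by decide
  exact this k (Finset.mem_range.2 hk)

include hK hg hsub in
lemma TriK_nonempty : (TriK K).Nonempty := by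
  have he : ({g 0, g 3} : Finset ℕ) ∈ EG g := mem_EG.2 ⟨(0,3), by decide, rfl⟩
  have heK : ({g 0, g 3} : Finset ℕ) ∈ K := EG_sub_K hK hsub he
  obtain ⟨t1, t2, hne, hft⟩ := two_triangles hK.1 heK (EG_card_two hg he)
  have : t1 ∈ K.filter (fun t => t.card = 3 ∧ ({g 0, g 3} : Finset ℕ) ⊆ t) := by
    rw [hft]; simp
  rw [Finset.mem_filter] at this
  exact ⟨t1, mem_TriK.2 ⟨this.1, this.2.1⟩⟩

/-- the incidence set: (G-edge, triangle) pairs -/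
def Inc (K : Finset (Finset ℕ)) (g : ℕ → ℕ) : Finset (Finset ℕ × Finset ℕ) :=
  (EG g ×ˢ TriK K).filter (fun p => p.1 ⊆ p.2)

lemma mem_Inc {p : Finset ℕ × Finset ℕ} :
    p ∈ Inc K g ↔ p.1 ∈ EG g ∧ p.2 ∈ TriK K ∧ p.1 ⊆ p.2 := by
  simp [Inc, Finset.mem_filter, Finset.mem_product, and_assoc]

include hK hg hsub in
lemma Inc_card : (Inc K g).card = 18 := by
  have hfib : (Inc K g).card = ∑ e ∈ EG g, ((Inc K g).filter (fun p => p.1 = e)).card := by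
    apply Finset.card_eq_sum_card_fiberwise
    intro p hp
    exact (mem_Inc.1 hp).1
  rw [hfib]
  have hstep : ∀ e ∈ EG g, ((Inc K g).filter (fun p => p.1 = e)).card = 2 := by
    intro e he
    obtain ⟨t1, t2, hne, hft⟩ := two_triangles hK.1 (EG_sub_K hK hsub he) (EG_card_two hg he)
    have himg : (Inc K g).filter (fun p => p.1 = e)
        = (K.filter (fun t => t.card = 3 ∧ e ⊆ t)).image (fun t => (e, t)) := by
      ext p
      simp only [Finset.mem_filter, Finset.mem_image, mem_Inc, mem_TriK]
      constructor
      · rintro ⟨⟨h1, ⟨h2a, h2b⟩, h3⟩, rfl⟩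
        exact ⟨p.2, ⟨⟨h2a, h2b, h3⟩, by simp⟩⟩
      · rintro ⟨t, ⟨⟨ht1, ht2, ht3⟩, rfl⟩⟩
        exact ⟨⟨he, ⟨ht1, ht2⟩, ht3⟩, rfl⟩
    rw [himg, Finset.card_image_of_injective _ (fun a b h => by simpa using h), hft,
      Finset.card_pair hne]
  rw [Finset.sum_congr rfl hstep, Finset.sum_const, EG_card hg]
  norm_num

end MainCtx

/-! ### Per-vertex incidence analysis -/

lemma filter_pair_card {α : Type*} [DecidableEq α] {a b : α} (hab : a ≠ b)
    (P : α → Prop) [DecidablePred P] :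
    (({a, b} : Finset α).filter P).card
      = (if P a then 1 else 0) + (if P b then 1 else 0) := by
  rw [Finset.filter_insert, Finset.filter_singleton]
  split_ifs <;> simp_all

open Classical in
/-- incidences in a given class -/
noncomputable def fibQ {K : Finset (Finset ℕ)} (hne : (TriK K).Nonempty) (g : ℕ → ℕ)
    (q : QQ K g) : Finset (Finset ℕ × Finset ℕ) :=
  (Inc K g).filter (fun p => clm hne g p.2 = q)

open Classical in
/-- incidences in a given class at a given vertex -/
noncomputable def fibAtQ {K : Finset (Finset ℕ)} (hne : (TriK K).Nonempty) (g : ℕ → ℕ)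
    (q : QQ K g) (u : ℕ) : Finset (Finset ℕ × Finset ℕ) :=
  (fibQ hne g q).filter (fun p => u ∈ p.1)

lemma mem_fibAtQ {K : Finset (Finset ℕ)} {hne : (TriK K).Nonempty} {g : ℕ → ℕ}
    {q : QQ K g} {u : ℕ} {p : Finset ℕ × Finset ℕ} :
    p ∈ fibAtQ hne g q u ↔ p ∈ Inc K g ∧ clm hne g p.2 = q ∧ u ∈ p.1 := by
  simp [fibAtQ, fibQ, and_assoc]

namespace LinkData
variable {K : Finset (Finset ℕ)} {g : ℕ → ℕ} {u : ℕ} (L : LinkData K u)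
variable (hK : TriS2 K) (hg : Function.Injective g)
  (hsub : K33.image (Finset.image g) ⊆ K) (hne : (TriK K).Nonempty)

include hK in
lemma T_mem_TriK {j : ℕ} (hj : j < L.n) : L.T j ∈ TriK K :=
  mem_TriK.2 ⟨L.T_mem hj, L.T_card hj⟩

lemma pair_sub_T_self {j : ℕ} (hj : j < L.n) : ({u, L.h j} : Finset ℕ) ⊆ L.T j := by
  intro x hx
  simp only [Finset.mem_insert, Finset.mem_singleton] at hx
  rcases hx with rfl | rfl
  · exact L.u_mem_T
  · exact (L.h_mem_T_iff hj hj).2 (Or.inl rfl)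

lemma pair_sub_T_pred {j : ℕ} (hj : j < L.n) : ({u, L.h j} : Finset ℕ) ⊆ L.T (L.pred j) := by
  intro x hx
  simp only [Finset.mem_insert, Finset.mem_singleton] at hx
  rcases hx with rfl | rfl
  · exact L.u_mem_T
  · exact (L.h_mem_T_iff hj L.pred_lt).2 (Or.inr rfl)

include hK in
lemma cut_mem_K {j : ℕ} (hj : j < L.n) : ({u, L.h j} : Finset ℕ) ∈ K := by
  apply sc_mem hK.1.1 (L.T_mem hj) (L.pair_sub_T_self hj)
  simp

lemma cut_card {j : ℕ} (hj : j < L.n) : ({u, L.h j} : Finset ℕ).card = 2 :=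
  Finset.card_pair (L.u_ne_h hj)

include hK in
lemma cut_unmarked {j : ℕ} (hj : j < L.n) (hcut : ({u, L.h j} : Finset ℕ) ∉ EG g) :
    clm hne g (L.T (L.pred j)) = clm hne g (L.T j) := by
  apply clm_eq_of_EH hne (e := ({u, L.h j} : Finset ℕ))
    (mem_EHset.2 ⟨L.cut_mem_K hK hj, L.cut_card hj, hcut⟩)
    (L.T_mem_TriK hK L.pred_lt) (L.T_mem_TriK hK hj)
    (L.pair_sub_T_pred hj) (L.pair_sub_T_self hj)

include hK hg hsub in
/-- classification of incidences at `u` -/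
lemma inc_at_u {e t : Finset ℕ} (he : e ∈ EG g) (heu : u ∈ e) (ht : t ∈ TriK K)
    (hst : e ⊆ t) :
    ∃ j < L.n, e = ({u, L.h j} : Finset ℕ) ∧ (t = L.T (L.pred j) ∨ t = L.T j) := by
  obtain ⟨a, b, hab, habe⟩ := Finset.card_eq_two.1 (EG_card_two hg he)
  have hx : ∃ x, x ≠ u ∧ e = ({u, x} : Finset ℕ) := by
    subst habe
    simp only [Finset.mem_insert, Finset.mem_singleton] at heu
    rcases heu with rfl | rfl
    · exact ⟨b, fun h => hab h.symm, rfl⟩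
    · exact ⟨a, fun h => hab h, by rw [Finset.pair_comm]⟩
  obtain ⟨x, hxu, rfl⟩ := hx
  have hxl : ({x} : Finset ℕ) ∈ link K u :=
    (singleton_mem_link hK.1.1).2 ⟨hxu, EG_sub_K hK hsub he⟩
  obtain ⟨j, hj, rfl⟩ := L.vert_iff.1 hxl
  have ht2 := mem_TriK.1 ht
  exact ⟨j, hj, rfl, (L.tri_pair_iff hK.1.1 hj).1 ⟨ht2.1, ht2.2, hst⟩⟩

include hK hg hsub in
open Classical in
lemma fibAt_decomp (q : QQ K g) :
    fibAtQ hne g q u = (Finset.range L.n).biUnion (fun j =>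
      if ({u, L.h j} : Finset ℕ) ∈ EG g then
        ((({L.T (L.pred j), L.T j}) : Finset (Finset ℕ)).filter
          (fun t => clm hne g t = q)).image (fun t => (({u, L.h j} : Finset ℕ), t))
      else ∅) := by
  ext p
  simp only [Finset.mem_biUnion, Finset.mem_range]
  constructor
  · intro hp
    obtain ⟨hpI, hpq, hpu⟩ := mem_fibAtQ.1 hp
    obtain ⟨he, ht, hst⟩ := mem_Inc.1 hpI
    obtain ⟨j, hj, hpe, hpt⟩ := L.inc_at_u hK hg hsub he hpu ht hst
    refine ⟨j, hj, ?_⟩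
    rw [if_pos (hpe ▸ he)]
    refine Finset.mem_image.2 ⟨p.2, ?_, ?_⟩
    · rw [Finset.mem_filter]
      refine ⟨?_, hpq⟩
      simp only [Finset.mem_insert, Finset.mem_singleton]
      tauto
    · exact Prod.ext hpe.symm rfl
  · rintro ⟨j, hj, hp⟩
    by_cases hm : ({u, L.h j} : Finset ℕ) ∈ EG g
    · rw [if_pos hm] at hp
      obtain ⟨t, htf, rfl⟩ := Finset.mem_image.1 hp
      rw [Finset.mem_filter] at htf
      obtain ⟨htm, htq⟩ := htf
      simp only [Finset.mem_insert, Finset.mem_singleton] at htm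
      apply mem_fibAtQ.2
      refine ⟨mem_Inc.2 ⟨hm, ?_, ?_⟩, htq, by simp⟩
      · rcases htm with rfl | rfl
        · exact L.T_mem_TriK hK L.pred_lt
        · exact L.T_mem_TriK hK hj
      · rcases htm with rfl | rfl
        · exact L.pair_sub_T_pred hj
        · exact L.pair_sub_T_self hj
    · rw [if_neg hm] at hp
      simp at hp

include L hK hg hsub in
open Classical in
lemma fibAt_even (q : QQ K g) : (fibAtQ hne g q u).card % 2 = 0 := by
  rw [fibAt_decomp L hK hg hsub hne q, Finset.card_biUnion]
  · -- parity computation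
    have hcongr : ∀ j ∈ Finset.range L.n,
        (if ({u, L.h j} : Finset ℕ) ∈ EG g then
          ((({L.T (L.pred j), L.T j}) : Finset (Finset ℕ)).filter
            (fun t => clm hne g t = q)).image (fun t => (({u, L.h j} : Finset ℕ), t))
        else ∅).card % 2
        = ((if clm hne g (L.T (L.pred j)) = q then 1 else 0)
            + (if clm hne g (L.T j) = q then 1 else 0)) % 2 := by
      intro j hj
      rw [Finset.mem_range] at hj
      by_cases hm : ({u, L.h j} : Finset ℕ) ∈ EG g
      · rw [if_pos hm, Finset.card_image_of_injective _ (fun a b h => by simpa using h),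
          filter_pair_card (L.T_pred_ne hj)]
      · rw [if_neg hm, Finset.card_empty, L.cut_unmarked hK hne hj hm]
        split_ifs <;> simp
    rw [Finset.sum_nat_mod, Finset.sum_congr rfl hcongr, ← Finset.sum_nat_mod,
      Finset.sum_add_distrib]
    have hre : ∑ j ∈ Finset.range L.n, (if clm hne g (L.T (L.pred j)) = q then 1 else 0)
        = ∑ j ∈ Finset.range L.n, (if clm hne g (L.T j) = q then 1 else 0) := by
      apply Finset.sum_nbij' (fun j => L.pred j) (fun j => (j + 1) % L.n)
      · intro a ha; exact Finset.mem_range.2 L.pred_lt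
      · intro a ha; exact Finset.mem_range.2 L.succ_lt
      · intro a ha; exact L.pred_succ (Finset.mem_range.1 ha)
      · intro a ha; exact L.succ_pred (Finset.mem_range.1 ha)
      · intro a ha; rfl
    rw [hre]
    omega
  · -- disjointness
    intro i hi j hj hij
    rw [Finset.mem_coe, Finset.mem_range] at hi hj
    have hdiff : ({u, L.h i} : Finset ℕ) ≠ ({u, L.h j} : Finset ℕ) := by
      intro hEq
      have : L.h i ∈ ({u, L.h j} : Finset ℕ) := by rw [← hEq]; simp
      simp only [Finset.mem_insert, Finset.mem_singleton] at this
      rcases this with h | h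
      · exact (L.u_ne_h hi) h.symm
      · exact hij (L.h_inj hi hj h)
    simp only [Function.onFun]
    rw [Finset.disjoint_left]
    intro p hpi hpj
    by_cases h1 : ({u, L.h i} : Finset ℕ) ∈ EG g
    · by_cases h2 : ({u, L.h j} : Finset ℕ) ∈ EG g
      · rw [if_pos h1, Finset.mem_image] at hpi
        rw [if_pos h2, Finset.mem_image] at hpj
        obtain ⟨t1, _, h1e⟩ := hpi
        obtain ⟨t2, _, h2e⟩ := hpj
        exact hdiff ((congrArg Prod.fst h1e).trans (congrArg Prod.fst h2e).symm)
      · rw [if_neg h2] at hpj; simp at hpj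
    · rw [if_neg h1] at hpi; simp at hpi

end LinkData

/-! ### mod-arithmetic helpers for walking around a cycle -/

lemma mod_walk_fwd {n : ℕ} {a b : ℕ} (ha : a < n) (hb : b < n) :
    (a + ((b + n - a) % n)) % n = b := by
  rw [Nat.add_mod_mod, show a + (b + n - a) = b + n by omega, Nat.add_mod_right,
    Nat.mod_eq_of_lt hb]

lemma mod_walk_bwd {n : ℕ} {a b : ℕ} (ha : a < n) (hb : b < n) :
    (a + ((a + n - b) % n) * (n - 1)) % n = b := by
  set d := (a + n - b) % n with hd
  have key : d * (n - 1) + d = d * n := by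
    calc d * (n-1) + d = d * ((n-1) + 1) := by ring
    _ = d * n := by rw [show n - 1 + 1 = n by omega]
  have h1 : (a + d * (n - 1) + d) % n = a % n := by
    rw [add_assoc, key, Nat.add_mul_mod_self_right]
  have h2 : (b + d) % n = a % n := by
    rw [hd, Nat.add_mod_mod, show b + (a + n - b) = a + n by omega, Nat.add_mod_right]
  have h3 : (a + d * (n - 1) + d) % n = (b + d) % n := h1.trans h2.symm
  have h4 : (a + d * (n - 1)) % n = b % n := Nat.ModEq.add_right_cancel' d h3
  rw [h4, Nat.mod_eq_of_lt hb]

lemma mod_diff_pos {n : ℕ} {a b : ℕ} (ha : a < n) (hb : b < n) (hab : a ≠ b) :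
    1 ≤ (b + n - a) % n := by
  rcases le_or_gt a b with h | h
  · rw [show b + n - a = (b - a) + n by omega, Nat.add_mod_right,
      Nat.mod_eq_of_lt (by omega)]
    omega
  · rw [Nat.mod_eq_of_lt (by omega)]; omega

lemma mod_shift_ne {n : ℕ} {a s : ℕ} (ha : a < n) (h1 : 1 ≤ s) (h2 : s ≤ n - 1) :
    (a + s) % n ≠ a := by
  intro hEq
  rcases Nat.lt_or_ge (a + s) n with h | h
  · rw [Nat.mod_eq_of_lt h] at hEq; omega
  · rw [Nat.mod_eq_sub_mod h, Nat.mod_eq_of_lt (by omega)] at hEq; omega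

namespace LinkData
variable {K : Finset (Finset ℕ)} {g : ℕ → ℕ} {u : ℕ} (L : LinkData K u)
variable (hK : TriS2 K) (hg : Function.Injective g)
  (hsub : K33.image (Finset.image g) ⊆ K) (hne : (TriK K).Nonempty)

lemma pred_succ_mod (a : ℕ) : L.pred ((a + 1) % L.n) = a % L.n := by
  have hn := L.hn
  unfold pred
  rw [show (a+1) % L.n + L.n - 1 = (a+1) % L.n + (L.n - 1) by omega, Nat.mod_add_mod,
    show a + 1 + (L.n - 1) = a + L.n by omega, Nat.add_mod_right]

lemma pred_mod (a : ℕ) : L.pred (a % L.n) = (a + (L.n - 1)) % L.n := by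
  have hn := L.hn
  unfold pred
  rw [show a % L.n + L.n - 1 = a % L.n + (L.n - 1) by omega, Nat.mod_add_mod]

include hK in
open Classical in
lemma class_const_fwd {j₀ : ℕ} (hj : j₀ < L.n) (s₀ : ℕ)
    (hno : ∀ s, 1 ≤ s → s ≤ s₀ → ({u, L.h ((j₀ + s) % L.n)} : Finset ℕ) ∉ EG g) :
    clm hne g (L.T ((j₀ + s₀) % L.n)) = clm hne g (L.T j₀) := by
  induction s₀ with
  | zero => rw [Nat.add_zero, Nat.mod_eq_of_lt hj]
  | succ s ih =>
    have hcut := L.cut_unmarked hK hne (j := (j₀ + s + 1) % L.n) (Nat.mod_lt _ L.npos)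
      (by rw [show j₀ + s + 1 = j₀ + (s+1) by ring]; exact hno (s+1) (by omega) le_rfl)
    rw [L.pred_succ_mod (j₀ + s)] at hcut
    rw [show j₀ + (s+1) = j₀ + s + 1 by ring]
    exact hcut.symm.trans (ih (fun s' h1 h2 => hno s' h1 (by omega)))

include hK in
open Classical in
lemma class_const_bwd {j₀ : ℕ} (hj : j₀ < L.n) (s₀ : ℕ)
    (hno : ∀ s, 1 ≤ s → s ≤ s₀ → ({u, L.h ((j₀ + s * (L.n - 1)) % L.n)} : Finset ℕ) ∉ EG g) :
    clm hne g (L.T ((j₀ + (s₀ + 1) * (L.n - 1)) % L.n)) = clm hne g (L.T (L.pred j₀)) := by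
  have hn := L.hn
  induction s₀ with
  | zero =>
    have hidx : (j₀ + (0 + 1) * (L.n - 1)) % L.n = L.pred j₀ := by
      unfold pred
      rw [show j₀ + (0 + 1) * (L.n - 1) = j₀ + (L.n - 1) by ring,
        show j₀ + L.n - 1 = j₀ + (L.n - 1) by omega]
    rw [hidx]
  | succ s ih =>
    have hcut := L.cut_unmarked hK hne (j := (j₀ + (s+1) * (L.n-1)) % L.n)
      (Nat.mod_lt _ L.npos) (hno (s+1) (by omega) le_rfl)
    rw [L.pred_mod,
      show j₀ + (s+1) * (L.n-1) + (L.n-1) = j₀ + (s+1+1) * (L.n-1) by ring] at hcut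
    exact hcut.trans (ih (fun s' h1 h2 => hno s' h1 (by omega)))

include L hK hg hsub in
open Classical in
/-- from any incidence at `u`, there is another incidence at `u` in the same class
with a different G-edge -/
lemma walk_second (q : QQ K g) {p : Finset ℕ × Finset ℕ} (hp : p ∈ fibAtQ hne g q u) :
    ∃ p' ∈ fibAtQ hne g q u, p'.1 ≠ p.1 := by
  obtain ⟨hpI, hpq, hpu⟩ := mem_fibAtQ.1 hp
  obtain ⟨he, ht, hst⟩ := mem_Inc.1 hpI
  obtain ⟨j₀, hj₀, hpe, hpt⟩ := L.inc_at_u hK hg hsub he hpu ht hst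
  obtain ⟨w, hw1, hw2, hwEG⟩ := EG_second hg he hpe
  have hwl : ({w} : Finset ℕ) ∈ link K u :=
    (singleton_mem_link hK.1.1).2 ⟨hw2, EG_sub_K hK hsub hwEG⟩
  obtain ⟨j₁, hj₁, rfl⟩ := L.vert_iff.1 hwl
  have hjne : j₁ ≠ j₀ := fun hEq => hw1 (by rw [hEq])
  rcases hpt with hcase | hcase
  · -- backward walk from T (pred j₀)
    have hex : ∃ s, 1 ≤ s ∧ ({u, L.h ((j₀ + s * (L.n - 1)) % L.n)} : Finset ℕ) ∈ EG g := by
      refine ⟨(j₀ + L.n - j₁) % L.n, mod_diff_pos hj₁ hj₀ hjne, ?_⟩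
      rw [mod_walk_bwd hj₀ hj₁]
      exact hwEG
    set s' := Nat.find hex with hs'def
    obtain ⟨hs'1, hs'EG⟩ := Nat.find_spec hex
    have hs'le : s' ≤ (j₀ + L.n - j₁) % L.n := Nat.find_min' hex
      ⟨mod_diff_pos hj₁ hj₀ hjne, by rw [mod_walk_bwd hj₀ hj₁]; exact hwEG⟩
    have hs'n1 : s' ≤ L.n - 1 := by
      have := Nat.mod_lt (j₀ + L.n - j₁) L.npos
      omega
    have hmin : ∀ s, 1 ≤ s → s ≤ s' - 1 →
        ({u, L.h ((j₀ + s * (L.n - 1)) % L.n)} : Finset ℕ) ∉ EG g := by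
      intro s h1 h2 hm
      exact Nat.find_min hex (show s < s' by omega) ⟨h1, hm⟩
    have hconst := L.class_const_bwd hK hne hj₀ (s' - 1) hmin
    rw [show s' - 1 + 1 = s' by omega] at hconst
    set m' := (j₀ + s' * (L.n - 1)) % L.n with hm'def
    have hm'lt : m' < L.n := Nat.mod_lt _ L.npos
    have hm'ne : m' ≠ j₀ := by
      intro hEq
      have hkey : (m' + s') % L.n = j₀ := by
        rw [hm'def, Nat.mod_add_mod, add_assoc,
          show s' * (L.n - 1) + s' = s' * L.n by
            calc s' * (L.n-1) + s' = s' * ((L.n-1)+1) := by ring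
            _ = s' * L.n := by rw [show L.n - 1 + 1 = L.n by have := L.hn; omega],
          Nat.add_mul_mod_self_right, Nat.mod_eq_of_lt hj₀]
      rw [hEq] at hkey
      exact mod_shift_ne hj₀ hs'1 hs'n1 hkey
    refine ⟨({u, L.h m'}, L.T m'), ?_, ?_⟩
    · apply mem_fibAtQ.2
      refine ⟨mem_Inc.2 ⟨hs'EG, L.T_mem_TriK hK hm'lt, L.pair_sub_T_self hm'lt⟩, ?_, by simp⟩
      calc clm hne g (L.T m') = clm hne g (L.T (L.pred j₀)) := hconst
      _ = q := by rw [← hcase]; exact hpq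
    · rw [hpe]
      intro hEq
      have hmm : L.h m' ∈ ({u, L.h j₀} : Finset ℕ) := by
        rw [← hEq]; simp
      simp only [Finset.mem_insert, Finset.mem_singleton] at hmm
      rcases hmm with h | h
      · exact (L.u_ne_h hm'lt) h.symm
      · exact hm'ne (L.h_inj hm'lt hj₀ h)
  · -- forward walk from T j₀
    have hex : ∃ s, 1 ≤ s ∧ ({u, L.h ((j₀ + s) % L.n)} : Finset ℕ) ∈ EG g := by
      refine ⟨(j₁ + L.n - j₀) % L.n, mod_diff_pos hj₀ hj₁ (Ne.symm hjne), ?_⟩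
      rw [mod_walk_fwd hj₀ hj₁]
      exact hwEG
    set s' := Nat.find hex with hs'def
    obtain ⟨hs'1, hs'EG⟩ := Nat.find_spec hex
    have hs'le : s' ≤ (j₁ + L.n - j₀) % L.n := Nat.find_min' hex
      ⟨mod_diff_pos hj₀ hj₁ (Ne.symm hjne), by rw [mod_walk_fwd hj₀ hj₁]; exact hwEG⟩
    have hs'n1 : s' ≤ L.n - 1 := by
      have := Nat.mod_lt (j₁ + L.n - j₀) L.npos
      omega
    have hmin : ∀ s, 1 ≤ s → s ≤ s' - 1 →
        ({u, L.h ((j₀ + s) % L.n)} : Finset ℕ) ∉ EG g := by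
      intro s h1 h2 hm
      exact Nat.find_min hex (show s < s' by omega) ⟨h1, hm⟩
    have hconst := L.class_const_fwd hK hne hj₀ (s' - 1) hmin
    set m' := (j₀ + s') % L.n with hm'def
    have hm'lt : m' < L.n := Nat.mod_lt _ L.npos
    have hm'ne : m' ≠ j₀ := by
      rw [hm'def]
      exact mod_shift_ne hj₀ hs'1 hs'n1
    have hpredm' : L.pred m' = (j₀ + (s' - 1)) % L.n := by
      rw [hm'def, show j₀ + s' = (j₀ + (s' - 1)) + 1 by omega]
      exact L.pred_succ_mod _
    refine ⟨({u, L.h m'}, L.T (L.pred m')), ?_, ?_⟩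
    · apply mem_fibAtQ.2
      refine ⟨mem_Inc.2 ⟨hs'EG, L.T_mem_TriK hK L.pred_lt, L.pair_sub_T_pred hm'lt⟩, ?_, by simp⟩
      calc clm hne g (L.T (L.pred m')) = clm hne g (L.T ((j₀ + (s' - 1)) % L.n)) := by
            rw [hpredm']
      _ = clm hne g (L.T j₀) := hconst
      _ = q := by rw [← hcase]; exact hpq
    · rw [hpe]
      intro hEq
      have hmm : L.h m' ∈ ({u, L.h j₀} : Finset ℕ) := by
        rw [← hEq]; simp
      simp only [Finset.mem_insert, Finset.mem_singleton] at hmm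
      rcases hmm with h | h
      · exact (L.u_ne_h hm'lt) h.symm
      · exact hm'ne (L.h_inj hm'lt hj₀ h)

end LinkData

/-! ### dual connectivity -/

def relA (K : Finset (Finset ℕ)) : TT K → TT K → Prop :=
  fun a b => ∃ e : Finset ℕ, e.card = 2 ∧ e ⊆ a.1 ∧ e ⊆ b.1

namespace LinkData
variable {K : Finset (Finset ℕ)} {u : ℕ} (L : LinkData K u)
variable (hK : TriS2 K)

include hK in
lemma rtg_T (s : ℕ) {j : ℕ} (hj : j < L.n) (a b : TT K)
    (hae : a.1 = L.T j) (hbe : b.1 = L.T ((j + s) % L.n)) :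
    Relation.ReflTransGen (relA K) a b := by
  induction s generalizing b with
  | zero =>
    have hab : a = b := Subtype.ext (by rw [hae, hbe, Nat.add_zero, Nat.mod_eq_of_lt hj])
    rw [hab]
  | succ s ih =>
    have hc : L.T ((j + s) % L.n) ∈ TriK K := L.T_mem_TriK hK (Nat.mod_lt _ L.npos)
    have h1 : Relation.ReflTransGen (relA K) a ⟨L.T ((j+s)%L.n), hc⟩ := ih _ rfl
    have h2 : relA K ⟨L.T ((j+s)%L.n), hc⟩ b := by
      refine ⟨{u, L.h ((j + s + 1) % L.n)},
        Finset.card_pair (L.u_ne_h (Nat.mod_lt _ L.npos)), ?_, ?_⟩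
      · have hpp : L.pred ((j+s+1) % L.n) = (j+s) % L.n := L.pred_succ_mod (j+s)
        show ({u, L.h ((j + s + 1) % L.n)} : Finset ℕ) ⊆ L.T ((j+s)%L.n)
        rw [← hpp]
        exact L.pair_sub_T_pred (Nat.mod_lt _ L.npos)
      · rw [hbe, show j + (s+1) = j + s + 1 by ring]
        exact L.pair_sub_T_self (Nat.mod_lt _ L.npos)
    exact h1.tail h2

include L hK in
lemma conn_at (a b : TT K) (hau : u ∈ a.1) (hbu : u ∈ b.1) :
    Relation.ReflTransGen (relA K) a b := by
  obtain ⟨j, hj, haT⟩ := L.tri_eq_T hK.1.1 (mem_TriK.1 a.2).1 (mem_TriK.1 a.2).2 hau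
  obtain ⟨j', hj', hbT⟩ := L.tri_eq_T hK.1.1 (mem_TriK.1 b.2).1 (mem_TriK.1 b.2).2 hbu
  apply L.rtg_T hK ((j' + L.n - j) % L.n) hj a b haT
  rw [hbT]
  congr 1
  exact (mod_walk_fwd hj hj').symm

end LinkData

section DualConn
variable {K : Finset (Finset ℕ)}

lemma common_tri (hK : TriS2 K) {v w : ℕ} (hvw : ({v, w} : Finset ℕ) ∈ K) (hne : v ≠ w) :
    ∃ t ∈ TriK K, v ∈ t ∧ w ∈ t := by
  have hv : ({v} : Finset ℕ) ∈ K := sc_singleton hK.1.1 hvw (by simp)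
  set L := LD hK.1 hv
  have hwl : ({w} : Finset ℕ) ∈ link K v := (singleton_mem_link hK.1.1).2 ⟨Ne.symm hne, hvw⟩
  obtain ⟨i, hi, rfl⟩ := L.vert_iff.1 hwl
  exact ⟨L.T i, L.T_mem_TriK hK hi, L.u_mem_T, (L.h_mem_T_iff hi hi).2 (Or.inl rfl)⟩

lemma dual_conn (hK : TriS2 K) (a b : TT K) :
    Relation.ReflTransGen (relA K) a b := by
  have ha3 := mem_TriK.1 a.2
  have hb3 := mem_TriK.1 b.2
  obtain ⟨x, hx⟩ : ∃ x, x ∈ a.1 := by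
    rcases Finset.eq_empty_or_nonempty a.1 with h | h
    · rw [h] at ha3; simp at ha3
    · exact h
  obtain ⟨y, hy⟩ : ∃ y, y ∈ b.1 := by
    rcases Finset.eq_empty_or_nonempty b.1 with h | h
    · rw [h] at hb3; simp at hb3
    · exact h
  have hx1 : ({x} : Finset ℕ) ∈ K := sc_singleton hK.1.1 ha3.1 hx
  have hy1 : ({y} : Finset ℕ) ∈ K := sc_singleton hK.1.1 hb3.1 hy
  have key : ∀ y', Relation.ReflTransGen (fun a b => ({a, b} : Finset ℕ) ∈ K) x y' →
      ∀ b' : TT K, y' ∈ b'.1 → Relation.ReflTransGen (relA K) a b' := by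
    intro y' hrtg
    induction hrtg with
    | refl =>
      intro b' hb'
      exact (LD hK.1 hx1).conn_at hK a b' hx hb'
    | @tail m c hxm hmc ih =>
      intro b' hb'
      rcases eq_or_ne m c with rfl | hne
      · exact ih b' hb'
      · obtain ⟨t, htT, hmt, hct⟩ := common_tri hK hmc hne
        have h1 := ih ⟨t, htT⟩ hmt
        have hc1 : ({c} : Finset ℕ) ∈ K := sc_singleton hK.1.1 (mem_TriK.1 htT).1 hct
        have h2 := (LD hK.1 hc1).conn_at hK ⟨t, htT⟩ b' hct hb'
        exact h1.trans h2
  exact key y (hK.1.2.2.2.2 x y hx1 hy1) b hy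

open Classical in
lemma fibQ_nonempty (hK : TriS2 K) {g : ℕ → ℕ} (hg : Function.Injective g)
    (hsub : K33.image (Finset.image g) ⊆ K) (hne : (TriK K).Nonempty) (q : QQ K g) :
    (fibQ hne g q).Nonempty := by
  obtain ⟨a, rfl⟩ := Quotient.exists_rep q
  -- a triangle containing the G-edge {g 0, g 3}
  have he0 : ({g 0, g 3} : Finset ℕ) ∈ EG g := mem_EG.2 ⟨(0,3), by decide, rfl⟩
  have he0K : ({g 0, g 3} : Finset ℕ) ∈ K := EG_sub_K hK hsub he0
  obtain ⟨t1, t2, htne, hft⟩ := two_triangles hK.1 he0K (EG_card_two hg he0)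
  have ht1 : t1 ∈ K.filter (fun t => t.card = 3 ∧ ({g 0, g 3} : Finset ℕ) ⊆ t) := by
    rw [hft]; simp
  rw [Finset.mem_filter] at ht1
  have ht1T : t1 ∈ TriK K := mem_TriK.2 ⟨ht1.1, ht1.2.1⟩
  set b : TT K := ⟨t1, ht1T⟩
  have hconn := dual_conn hK a b
  -- walk towards b; produce an incidence in the class of a
  have key : ∀ (x : TT K), Relation.ReflTransGen (relA K) x b →
      ∃ p ∈ Inc K g, clm hne g p.2 = (⟦x⟧ : Quotient (stH K g)) := by
    intro x hx
    induction hx using Relation.ReflTransGen.head_induction_on with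
    | refl =>
      refine ⟨({g 0, g 3}, t1), mem_Inc.2 ⟨he0, ht1T, ht1.2.2⟩, ?_⟩
      exact clm_mk hne ht1T
    | @head x c hxc hcb ih =>
      obtain ⟨e, he2, hex, hec⟩ := hxc
      by_cases hEG : e ∈ EG g
      · exact ⟨(e, x.1), mem_Inc.2 ⟨hEG, x.2, hex⟩, clm_mk hne x.2⟩
      · have heK : e ∈ K := sc_mem hK.1.1 (mem_TriK.1 x.2).1 hex
          (by intro h; rw [h] at he2; simp at he2)
        have heH : e ∈ EHset K g := mem_EHset.2 ⟨heK, he2, hEG⟩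
        have hxc' : (⟦x⟧ : Quotient (stH K g)) = ⟦c⟧ :=
          Quotient.sound (Relation.ReflTransGen.single ⟨e, heH, hex, hec⟩)
        rw [hxc']
        exact ih
  obtain ⟨p, hpI, hpq⟩ := key a hconn
  exact ⟨p, Finset.mem_filter.2 ⟨hpI, hpq⟩⟩

end DualConn

/-! ### upper bound: at most 4 classes -/

section Upper
variable {K : Finset (Finset ℕ)} {g : ℕ → ℕ}
variable (hK : TriS2 K) (hg : Function.Injective g)
  (hsub : K33.image (Finset.image g) ⊆ K) (hne : (TriK K).Nonempty)

include hK hg hsub in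
open Classical in
lemma fibQ_even (q : QQ K g) : (fibQ hne g q).card % 2 = 0 := by
  have hdecomp : fibQ hne g q = (Finset.range 3).biUnion (fun a => fibAtQ hne g q (g a)) := by
    ext p
    simp only [Finset.mem_biUnion, Finset.mem_range]
    constructor
    · intro hp
      have hpI := (Finset.mem_filter.1 hp).1
      obtain ⟨he, -, -⟩ := mem_Inc.1 hpI
      obtain ⟨A, hA3, hAmem, -⟩ := EG_part hg he
      exact ⟨A, hA3, Finset.mem_filter.2 ⟨hp, hAmem⟩⟩
    · rintro ⟨A, hA3, hp⟩
      exact (Finset.mem_filter.1 hp).1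
  rw [hdecomp, Finset.card_biUnion, Finset.sum_nat_mod]
  · have hterm : ∀ a ∈ Finset.range 3, (fibAtQ hne g q (g a)).card % 2 = 0 := by
      intro a ha
      rw [Finset.mem_range] at ha
      have hav : ({g a} : Finset ℕ) ∈ K := gvert_mem hK hsub (by omega)
      exact (LD hK.1 hav).fibAt_even hK hg hsub hne q
    rw [Finset.sum_congr rfl hterm]
    simp
  · intro i hi j hj hij
    simp only [Function.onFun]
    rw [Finset.disjoint_left]
    intro p hpi hpj
    have h1 := (Finset.mem_filter.1 hpi).2
    have h2 := (Finset.mem_filter.1 hpj).2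
    have hpI := (Finset.mem_filter.1 (Finset.mem_filter.1 hpi).1).1
    obtain ⟨he, -, -⟩ := mem_Inc.1 hpI
    obtain ⟨A, hA3, hAmem, hAuniq⟩ := EG_part hg he
    rw [Finset.mem_coe, Finset.mem_range] at hi hj
    exact hij ((hAuniq i hi h1).trans (hAuniq j hj h2).symm)

include hK hg hsub in
open Classical in
lemma fibQ_card_ge4 (q : QQ K g) : 4 ≤ (fibQ hne g q).card := by
  obtain ⟨p, hp⟩ := fibQ_nonempty hK hg hsub hne q
  have hpI := (Finset.mem_filter.1 hp).1
  obtain ⟨he, ht, hst⟩ := mem_Inc.1 hpI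
  obtain ⟨a, b, hab, habe⟩ := Finset.card_eq_two.1 (EG_card_two hg he)
  have haep : a ∈ p.1 := by rw [habe]; simp
  have hbep : b ∈ p.1 := by rw [habe]; simp
  obtain ⟨ka, hka, hkae⟩ := EG_endpoints he haep
  obtain ⟨kb, hkb, hkbe⟩ := EG_endpoints he hbep
  have hav : ({a} : Finset ℕ) ∈ K := by rw [hkae]; exact gvert_mem hK hsub hka
  have hbv : ({b} : Finset ℕ) ∈ K := by rw [hkbe]; exact gvert_mem hK hsub hkb
  have hpa : p ∈ fibAtQ hne g q a := Finset.mem_filter.2 ⟨hp, haep⟩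
  have hpb : p ∈ fibAtQ hne g q b := Finset.mem_filter.2 ⟨hp, hbep⟩
  obtain ⟨p₂, hp₂, hp₂ne⟩ := (LD hK.1 hav).walk_second hK hg hsub hne q hpa
  obtain ⟨p₃, hp₃, hp₃ne⟩ := (LD hK.1 hbv).walk_second hK hg hsub hne q hpb
  have hp₂Q : p₂ ∈ fibQ hne g q := (Finset.mem_filter.1 hp₂).1
  have hp₃Q : p₃ ∈ fibQ hne g q := (Finset.mem_filter.1 hp₃).1
  have hp₂a : a ∈ p₂.1 := (mem_fibAtQ.1 hp₂).2.2
  have hp₃b : b ∈ p₃.1 := (mem_fibAtQ.1 hp₃).2.2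
  have hp₂I := (Finset.mem_filter.1 hp₂Q).1
  have hp₂EG := (mem_Inc.1 hp₂I).1
  have hp₂₃ : p₂.1 ≠ p₃.1 := by
    intro hEq
    have hbp₂ : b ∈ p₂.1 := by rw [hEq]; exact hp₃b
    have hsubp : ({a, b} : Finset ℕ) ⊆ p₂.1 := by
      intro z hz
      simp only [Finset.mem_insert, Finset.mem_singleton] at hz
      rcases hz with rfl | rfl
      · exact hp₂a
      · exact hbp₂
    have h2 : p₂.1.card ≤ ({a, b} : Finset ℕ).card := by
      rw [Finset.card_pair hab, EG_card_two hg hp₂EG]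
    have := Finset.eq_of_subset_of_card_le hsubp h2
    rw [← this, ← habe] at hp₂ne
    exact hp₂ne rfl
  have hd1 : p₂ ≠ p := fun h => hp₂ne (by rw [h])
  have hd2 : p₃ ≠ p := fun h => hp₃ne (by rw [h])
  have hd3 : p₂ ≠ p₃ := fun h => hp₂₃ (by rw [h])
  have hsub3 : ({p₂, p₃, p} : Finset (Finset ℕ × Finset ℕ)) ⊆ fibQ hne g q := by
    intro z hz
    simp only [Finset.mem_insert, Finset.mem_singleton] at hz
    rcases hz with rfl | rfl | rfl
    · exact hp₂Q
    · exact hp₃Q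
    · exact hp
  have hcard3 : ({p₂, p₃, p} : Finset (Finset ℕ × Finset ℕ)).card = 3 := by
    rw [Finset.card_insert_of_notMem (by simp [hd3, hd1]),
      Finset.card_insert_of_notMem (by simp [hd2]), Finset.card_singleton]
  have h3 : 3 ≤ (fibQ hne g q).card := hcard3 ▸ Finset.card_le_card hsub3
  have heven := fibQ_even hK hg hsub hne q
  omega

include hK hg hsub hne in
open Classical in
lemma QQ_card_le4 : Fintype.card (QQ K g) ≤ 4 := by
  have h18 := Inc_card hK hg hsub
  have hsum : (Inc K g).card
      = ∑ q ∈ (Finset.univ : Finset (QQ K g)),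
          ((Inc K g).filter (fun p => clm hne g p.2 = q)).card :=
    Finset.card_eq_sum_card_fiberwise (fun p _ => Finset.mem_univ _)
  have hfil : ∀ q : QQ K g,
      ((Inc K g).filter (fun p => clm hne g p.2 = q)).card = (fibQ hne g q).card := by
    intro q
    congr 1
  have hge : ∀ q ∈ (Finset.univ : Finset (QQ K g)),
      4 ≤ ((Inc K g).filter (fun p => clm hne g p.2 = q)).card := by
    intro q _
    rw [hfil q]
    exact fibQ_card_ge4 hK hg hsub hne q
  have hle : ∑ q ∈ (Finset.univ : Finset (QQ K g)), 4
      ≤ ∑ q ∈ (Finset.univ : Finset (QQ K g)),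
          ((Inc K g).filter (fun p => clm hne g p.2 = q)).card :=
    Finset.sum_le_sum hge
  rw [Finset.sum_const, Finset.card_univ, ← hsum, h18, smul_eq_mul] at hle
  omega

end Upper

/-! ### lower bound setup: boundary map over GF(2) -/

section Lower
variable {K : Finset (Finset ℕ)} {g : ℕ → ℕ}

instance : DecidableEq (TT K) := by unfold TT; infer_instance

/-- helper: a 2-element set containing u -/
lemma pair_repr {e : Finset ℕ} (he : e.card = 2) {u : ℕ} (hu : u ∈ e) :
    ∃ w, w ≠ u ∧ e = ({u, w} : Finset ℕ) := by
  obtain ⟨a, b, hab, rfl⟩ := Finset.card_eq_two.1 he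
  simp only [Finset.mem_insert, Finset.mem_singleton] at hu
  rcases hu with rfl | rfl
  · exact ⟨b, fun h => hab h.symm, rfl⟩
  · exact ⟨a, hab, Finset.pair_comm _ _⟩

variable (K g)

def bmat : Matrix (TT K) {e : Finset ℕ // e ∈ EHset K g} (ZMod 2) :=
  fun t e => if e.1 ⊆ t.1 then 1 else 0

noncomputable def bd : ({e : Finset ℕ // e ∈ EHset K g} → ZMod 2) →ₗ[ZMod 2] (TT K → ZMod 2) :=
  (bmat K g).mulVecLin

def Vfin : Finset (Finset ℕ) :=
  K.filter (fun s => s.card = 1) \ (Finset.range 6).image (fun k => ({g k} : Finset ℕ))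

def zvec : {S : Finset ℕ // S ∈ Vfin K g} → ({e : Finset ℕ // e ∈ EHset K g} → ZMod 2) :=
  fun S e => if S.1 ⊆ e.1 then 1 else 0

variable {K g}

lemma Vfin_spec {S : Finset ℕ} (hS : S ∈ Vfin K g) :
    ∃ x, S = ({x} : Finset ℕ) ∧ ({x} : Finset ℕ) ∈ K ∧ ∀ k < 6, x ≠ g k := by
  rw [Vfin, Finset.mem_sdiff, Finset.mem_filter] at hS
  obtain ⟨⟨hSK, hS1⟩, hSim⟩ := hS
  obtain ⟨x, rfl⟩ := Finset.card_eq_one.1 hS1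
  refine ⟨x, rfl, hSK, ?_⟩
  intro k hk hEq
  exact hSim (Finset.mem_image.2 ⟨k, Finset.mem_range.2 hk, by rw [hEq]⟩)

variable (hK : TriS2 K) (hg : Function.Injective g)
  (hsub : K33.image (Finset.image g) ⊆ K)

include hK in
lemma zvec_ker (S : {S : Finset ℕ // S ∈ Vfin K g}) : bd K g (zvec K g S) = 0 := by
  obtain ⟨x, hSx, hxK, hxg⟩ := Vfin_spec S.2
  funext t
  rw [bd, Matrix.mulVecLin_apply, Pi.zero_apply]
  show (∑ e, bmat K g t e * zvec K g S e) = 0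
  have hterm : ∀ e : {e : Finset ℕ // e ∈ EHset K g},
      bmat K g t e * zvec K g S e = if (e.1 ⊆ t.1 ∧ x ∈ e.1) then 1 else 0 := by
    intro e
    rw [bmat, zvec, hSx]
    have : ({x} : Finset ℕ) ⊆ e.1 ↔ x ∈ e.1 := by simp
    split_ifs with h1 h2 h3 <;> simp_all
  rw [Finset.sum_congr rfl (fun e _ => hterm e), Finset.sum_boole]
  by_cases hx : x ∈ t.1
  · -- exactly two such edges
    have ht3 := mem_TriK.1 t.2
    have herase : (t.1.erase x).card = 2 := by
      rw [Finset.card_erase_of_mem hx, ht3.2]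
    obtain ⟨y, z, hyz, hyzE⟩ := Finset.card_eq_two.1 herase
    have hyt : y ∈ t.1 := Finset.mem_of_mem_erase (by rw [hyzE]; simp)
    have hzt : z ∈ t.1 := Finset.mem_of_mem_erase (by rw [hyzE]; simp)
    have hxy : x ≠ y := by
      intro h; have : y ∈ t.1.erase x := by rw [hyzE]; simp
      rw [← h] at this; exact Finset.notMem_erase _ _ this
    have hxz : x ≠ z := by
      intro h; have : z ∈ t.1.erase x := by rw [hyzE]; simp
      rw [← h] at this; exact Finset.notMem_erase _ _ this
    have hEH : ∀ w, w ∈ t.1 → w ≠ x → ({x, w} : Finset ℕ) ∈ EHset K g := by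
      intro w hwt hwx
      refine mem_EHset.2 ⟨?_, Finset.card_pair (Ne.symm hwx), ?_⟩
      · apply sc_mem hK.1.1 ht3.1
        · intro i hi
          simp only [Finset.mem_insert, Finset.mem_singleton] at hi
          rcases hi with rfl | rfl
          · exact hx
          · exact hwt
        · simp
      · intro hEG
        obtain ⟨k, hk, hkx⟩ := EG_endpoints hEG (show x ∈ ({x, w} : Finset ℕ) by simp)
        exact hxg k hk hkx
    have hfil : Finset.univ.filter
        (fun e : {e : Finset ℕ // e ∈ EHset K g} => e.1 ⊆ t.1 ∧ x ∈ e.1)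
        = {⟨({x, y} : Finset ℕ), hEH y hyt (Ne.symm hxy)⟩,
           ⟨({x, z} : Finset ℕ), hEH z hzt (Ne.symm hxz)⟩} := by
      ext e
      simp only [Finset.mem_filter, Finset.mem_univ, true_and, Finset.mem_insert,
        Finset.mem_singleton]
      constructor
      · rintro ⟨het, hex⟩
        have he2 := (mem_EHset.1 e.2).2.1
        obtain ⟨w, hwx, hew⟩ := pair_repr he2 hex
        have hwt : w ∈ t.1 := het (by rw [hew]; simp)
        have hwyz : w ∈ t.1.erase x := Finset.mem_erase.2 ⟨hwx, hwt⟩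
        rw [hyzE] at hwyz
        simp only [Finset.mem_insert, Finset.mem_singleton] at hwyz
        rcases hwyz with rfl | rfl
        · left; exact Subtype.ext hew
        · right; exact Subtype.ext hew
      · rintro (rfl | rfl)
        · constructor
          · intro i hi
            simp only [Finset.mem_insert, Finset.mem_singleton] at hi
            rcases hi with rfl | rfl
            · exact hx
            · exact hyt
          · simp
        · constructor
          · intro i hi
            simp only [Finset.mem_insert, Finset.mem_singleton] at hi
            rcases hi with rfl | rfl
            · exact hx
            · exact hzt
          · simp
    rw [hfil, Finset.card_pair (by
      intro hEq
      have : ({x, y} : Finset ℕ) = ({x, z} : Finset ℕ) := congrArg Subtype.val hEq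
      have hy : y ∈ ({x, z} : Finset ℕ) := by rw [← this]; simp
      simp only [Finset.mem_insert, Finset.mem_singleton] at hy
      rcases hy with h | h
      · exact hxy h.symm
      · exact hyz h)]
    decide
  · have hfil : Finset.univ.filter
        (fun e : {e : Finset ℕ // e ∈ EHset K g} => e.1 ⊆ t.1 ∧ x ∈ e.1) = ∅ := by
      ext e
      simp only [Finset.mem_filter, Finset.mem_univ, true_and, Finset.notMem_empty,
        iff_false, not_and]
      intro het hex
      exact hx (het hex)
    rw [hfil]
    simp

include hK hg hsub in
lemma zvec_indep : LinearIndependent (ZMod 2) (zvec K g) := by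
  rw [Fintype.linearIndependent_iff]
  intro c hc
  by_contra hcon
  push_neg at hcon
  obtain ⟨S₀, hS₀⟩ := hcon
  have hzm : ∀ a : ZMod 2, a ≠ 0 → a = 1 := by decide
  -- support predicate on vertices
  set Sv : ℕ → Prop := fun x => ∃ hx : ({x} : Finset ℕ) ∈ Vfin K g, c ⟨{x}, hx⟩ = 1 with hSv
  have hSv₀ : ∃ x₀, Sv x₀ ∧ ({x₀} : Finset ℕ) ∈ K := by
    obtain ⟨x₀, hSx, hxK, hxg⟩ := Vfin_spec S₀.2
    refine ⟨x₀, ⟨by rw [← hSx]; exact S₀.2, ?_⟩, hxK⟩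
    have : (⟨({x₀} : Finset ℕ), by rw [← hSx]; exact S₀.2⟩ :
        {S : Finset ℕ // S ∈ Vfin K g}) = S₀ := Subtype.ext hSx.symm
    rw [this]
    exact hzm _ hS₀
  obtain ⟨x₀, hx₀Sv, hx₀K⟩ := hSv₀
  -- closure under edges of K
  have hclos : ∀ v w : ℕ, Sv v → ({v, w} : Finset ℕ) ∈ K → v ≠ w → Sv w := by
    intro v w hv hvw hvwne
    obtain ⟨hvV, hcv⟩ := hv
    have hvg : ∀ k < 6, v ≠ g k := by
      obtain ⟨x, hx1, -, hx3⟩ := Vfin_spec hvV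
      have hvx : v = x := by simpa using hx1
      rw [hvx]; exact hx3
    have heEH : ({v, w} : Finset ℕ) ∈ EHset K g := by
      refine mem_EHset.2 ⟨hvw, Finset.card_pair hvwne, ?_⟩
      intro hEG
      obtain ⟨k, hk, hkv⟩ := EG_endpoints hEG (show v ∈ ({v, w} : Finset ℕ) by simp)
      exact hvg k hk hkv
    have heval := congrFun hc ⟨({v, w} : Finset ℕ), heEH⟩
    rw [Finset.sum_apply, Pi.zero_apply] at heval
    simp only [Pi.smul_apply, smul_eq_mul] at heval
    have hterm : ∀ S : {S : Finset ℕ // S ∈ Vfin K g},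
        c S * zvec K g S ⟨({v, w} : Finset ℕ), heEH⟩
          = if S.1 ⊆ ({v, w} : Finset ℕ) then c S else 0 := by
      intro S
      rw [zvec]
      split_ifs <;> simp
    rw [Finset.sum_congr rfl (fun S _ => hterm S), ← Finset.sum_filter] at heval
    have hwK : ({w} : Finset ℕ) ∈ K := sc_singleton hK.1.1 hvw (by simp)
    have hfil_mem : ∀ (S : {S : Finset ℕ // S ∈ Vfin K g}),
        S.1 ⊆ ({v, w} : Finset ℕ) → S.1 = ({v} : Finset ℕ) ∨ S.1 = ({w} : Finset ℕ) := by
      intro S hSsub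
      obtain ⟨x, hx1, -, -⟩ := Vfin_spec S.2
      have hxvw : x ∈ ({v, w} : Finset ℕ) := hSsub (by rw [hx1]; simp)
      simp only [Finset.mem_insert, Finset.mem_singleton] at hxvw
      rcases hxvw with rfl | rfl
      · left; exact hx1
      · right; exact hx1
    by_cases hwV : ({w} : Finset ℕ) ∈ Vfin K g
    · have hfil : Finset.univ.filter
          (fun S : {S : Finset ℕ // S ∈ Vfin K g} => S.1 ⊆ ({v, w} : Finset ℕ))
          = {⟨({v} : Finset ℕ), hvV⟩, ⟨({w} : Finset ℕ), hwV⟩} := by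
        ext S
        simp only [Finset.mem_filter, Finset.mem_univ, true_and, Finset.mem_insert,
          Finset.mem_singleton]
        constructor
        · intro hS
          rcases hfil_mem S hS with h | h
          · left; exact Subtype.ext h
          · right; exact Subtype.ext h
        · rintro (rfl | rfl)
          · intro i hi; simp only [Finset.mem_singleton] at hi; simp [hi]
          · intro i hi; simp only [Finset.mem_singleton] at hi; simp [hi]
      rw [hfil, Finset.sum_pair (by
        intro hEq
        have := congrArg Subtype.val hEq
        simp only [Finset.singleton_inj] at this
        exact hvwne this)] at heval
      rw [hcv] at heval
      have hone : ∀ a : ZMod 2, 1 + a = 0 → a = 1 := by decide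
      exact ⟨hwV, hone _ heval⟩
    · exfalso
      have hfil : Finset.univ.filter
          (fun S : {S : Finset ℕ // S ∈ Vfin K g} => S.1 ⊆ ({v, w} : Finset ℕ))
          = {⟨({v} : Finset ℕ), hvV⟩} := by
        ext S
        simp only [Finset.mem_filter, Finset.mem_univ, true_and, Finset.mem_singleton]
        constructor
        · intro hS
          rcases hfil_mem S hS with h | h
          · exact Subtype.ext h
          · exact absurd (h ▸ S.2) hwV
        · rintro rfl
          intro i hi; simp only [Finset.mem_singleton] at hi; simp [hi]
      rw [hfil, Finset.sum_singleton, hcv] at heval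
      exact one_ne_zero heval
  -- follow a path to `g 0`
  have hg0K : ({g 0} : Finset ℕ) ∈ K := gvert_mem hK hsub (by omega)
  have hpath := hK.1.2.2.2.2 x₀ (g 0) hx₀K hg0K
  have hSvall : ∀ y, Relation.ReflTransGen (fun a b => ({a, b} : Finset ℕ) ∈ K) x₀ y →
      Sv y := by
    intro y hy
    induction hy with
    | refl => exact hx₀Sv
    | @tail b c h1 h2 ih =>
      rcases eq_or_ne b c with rfl | hbc
      · exact ih
      · exact hclos b c ih h2 hbc
  have hSvg0 : Sv (g 0) := hSvall (g 0) hpath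
  obtain ⟨hmem, -⟩ := hSvg0
  rw [Vfin, Finset.mem_sdiff] at hmem
  exact hmem.2 (Finset.mem_image.2 ⟨0, by simp, rfl⟩)

end Lower

/-! ### range family and dimension count -/

section Range
variable {K : Finset (Finset ℕ)} {g : ℕ → ℕ}
variable (hK : TriS2 K) (hg : Function.Injective g)
  (hsub : K33.image (Finset.image g) ⊆ K)

/-- indicator vector of a triangle -/
def indv (t : TT K) : TT K → ZMod 2 := fun s => if s = t then 1 else 0

include hK in
lemma bd_single {e : Finset ℕ} (he : e ∈ EHset K g) :
    ∃ t1 t2 : TT K, t1 ≠ t2 ∧ (∀ s : TT K, e ⊆ s.1 ↔ s = t1 ∨ s = t2) ∧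
      bd K g (Pi.single ⟨e, he⟩ 1) = indv t1 + indv t2 := by
  obtain ⟨heK, he2, -⟩ := mem_EHset.1 he
  obtain ⟨t1', t2', hne', hft⟩ := two_triangles hK.1 heK he2
  have ht1m : t1' ∈ K.filter (fun t => t.card = 3 ∧ e ⊆ t) := by rw [hft]; simp
  have ht2m : t2' ∈ K.filter (fun t => t.card = 3 ∧ e ⊆ t) := by rw [hft]; simp
  rw [Finset.mem_filter] at ht1m ht2m
  have ht1T : t1' ∈ TriK K := mem_TriK.2 ⟨ht1m.1, ht1m.2.1⟩
  have ht2T : t2' ∈ TriK K := mem_TriK.2 ⟨ht2m.1, ht2m.2.1⟩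
  refine ⟨⟨t1', ht1T⟩, ⟨t2', ht2T⟩, fun h => hne' (congrArg Subtype.val h), ?_, ?_⟩
  · intro s
    have hs3 := mem_TriK.1 s.2
    constructor
    · intro hes
      have : s.1 ∈ K.filter (fun t => t.card = 3 ∧ e ⊆ t) :=
        Finset.mem_filter.2 ⟨hs3.1, hs3.2, hes⟩
      rw [hft] at this
      simp only [Finset.mem_insert, Finset.mem_singleton] at this
      rcases this with h | h
      · exact Or.inl (Subtype.ext h)
      · exact Or.inr (Subtype.ext h)
    · rintro (rfl | rfl)
      · exact ht1m.2.2
      · exact ht2m.2.2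
  · funext s
    rw [bd, Matrix.mulVecLin_apply, Matrix.mulVec_single]
    show bmat K g s ⟨e, he⟩ * 1 = _
    rw [mul_one, bmat]
    have hiff : e ⊆ s.1 ↔ s = ⟨t1', ht1T⟩ ∨ s = ⟨t2', ht2T⟩ := by
      constructor
      · intro hes
        have : s.1 ∈ K.filter (fun t => t.card = 3 ∧ e ⊆ t) :=
          Finset.mem_filter.2 ⟨(mem_TriK.1 s.2).1, (mem_TriK.1 s.2).2, hes⟩
        rw [hft] at this
        simp only [Finset.mem_insert, Finset.mem_singleton] at this
        rcases this with h | h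
        · exact Or.inl (Subtype.ext h)
        · exact Or.inr (Subtype.ext h)
      · rintro (rfl | rfl)
        · exact ht1m.2.2
        · exact ht2m.2.2
    show _ = indv _ s + indv _ s
    simp only [indv]
    have hne12 : (⟨t1', ht1T⟩ : TT K) ≠ ⟨t2', ht2T⟩ := fun h => hne' (congrArg Subtype.val h)
    by_cases h1 : s = ⟨t1', ht1T⟩
    · rw [if_pos (hiff.2 (Or.inl h1)), if_pos h1, if_neg (by rw [h1]; exact hne12)]
      decide
    · by_cases h2 : s = ⟨t2', ht2T⟩
      · rw [if_pos (hiff.2 (Or.inr h2)), if_neg h1, if_pos h2]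
        decide
      · rw [if_neg (fun h => by rcases hiff.1 h with h' | h'; exacts [h1 h', h2 h']),
          if_neg h1, if_neg h2]
        decide

include hK in
lemma sum_indv_mem_range (a b : TT K) (hab : (⟦a⟧ : QQ K g) = ⟦b⟧) :
    indv a + indv b ∈ LinearMap.range (bd K g) := by
  have hzm : ∀ p q r : ZMod 2, (p + q) + (q + r) = p + r := by decide
  have hxx : ∀ (x : TT K), indv x + indv x = 0 := by
    intro x; funext s; simp only [indv, Pi.add_apply, Pi.zero_apply]
    have : ∀ a : ZMod 2, a + a = 0 := by decide
    exact this _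
  have hr : Relation.ReflTransGen (relH K g) a b := Quotient.exact hab
  clear hab
  induction hr with
  | refl => rw [hxx]; exact zero_mem _
  | @tail m c h1 h2 ih =>
    have hstep : indv m + indv c ∈ LinearMap.range (bd K g) := by
      rcases eq_or_ne m c with rfl | hmc
      · rw [hxx]; exact zero_mem _
      · obtain ⟨e, heH, hem, hec⟩ := h2
        obtain ⟨t1, t2, ht12, hiff, hbd⟩ := bd_single hK (g := g) heH
        rcases (hiff m).1 hem with h1 | h1 <;> rcases (hiff c).1 hec with h2 | h2
        · exact absurd (h1.trans h2.symm) hmc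
        · rw [h1, h2]; exact ⟨Pi.single ⟨e, heH⟩ 1, hbd⟩
        · rw [h1, h2, add_comm]; exact ⟨Pi.single ⟨e, heH⟩ 1, hbd⟩
        · exact absurd (h1.trans h2.symm) hmc
    have hcomb : indv a + indv c = (indv a + indv m) + (indv m + indv c) := by
      funext s
      simp only [Pi.add_apply]
      rw [hzm]
    rw [hcomb]
    exact add_mem ih hstep

open Classical in
noncomputable def wvec : {t : TT K // ¬ ((⟦t⟧ : QQ K g).out = t)} → (TT K → ZMod 2) :=
  fun t => indv t.1 + indv (⟦t.1⟧ : QQ K g).out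

include hK in
open Classical in
lemma wvec_mem_range (t : {t : TT K // ¬ ((⟦t⟧ : QQ K g).out = t)}) :
    wvec t ∈ LinearMap.range (bd K g) :=
  sum_indv_mem_range hK t.1 _ (Quotient.out_eq _).symm

open Classical in
lemma wvec_indep : LinearIndependent (ZMod 2) (wvec (K := K) (g := g)) := by
  rw [Fintype.linearIndependent_iff]
  intro c hc i
  have heval := congrFun hc i.1
  rw [Finset.sum_apply, Pi.zero_apply] at heval
  have hterm : ∀ i' : {t : TT K // ¬ ((⟦t⟧ : QQ K g).out = t)},
      (c i' • wvec i') i.1 = if i' = i then c i' else 0 := by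
    intro i'
    rw [Pi.smul_apply, smul_eq_mul, wvec]
    simp only [Pi.add_apply, indv]
    have hout : (i.1 = (⟦i'.1⟧ : QQ K g).out) → False := by
      intro hEq
      apply i.2
      have h1 : (⟦i.1⟧ : QQ K g) = ⟦i'.1⟧ := by rw [hEq, Quotient.out_eq]
      rw [h1, ← hEq]
    rw [if_neg (fun h => hout h)]
    by_cases h : i.1 = i'.1
    · rw [if_pos h, if_pos (Subtype.ext h.symm)]
      ring
    · rw [if_neg h, if_neg (fun hEq => h (by rw [hEq]))]
      ring
  rw [Finset.sum_congr rfl (fun i' _ => hterm i')] at heval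
  simp only [Finset.sum_ite_eq', Finset.mem_univ, if_true] at heval
  exact heval

open Classical in
lemma card_nonrep : Fintype.card {t : TT K // ¬ ((⟦t⟧ : QQ K g).out = t)}
    = Fintype.card (TT K) - Fintype.card (QQ K g) := by
  rw [Fintype.card_subtype_compl]
  congr 1
  apply Fintype.card_congr
  refine ⟨fun t => (⟦t.1⟧ : QQ K g), fun q => ⟨q.out, by exact congrArg Quotient.out (Quotient.out_eq (q : Quotient (stH K g)))⟩, ?_, ?_⟩
  · intro t
    exact Subtype.ext t.2
  · intro q
    exact Quotient.out_eq q

end Range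

/-! ### final assembly -/

section Final
variable {K : Finset (Finset ℕ)} {g : ℕ → ℕ}
variable (hK : TriS2 K) (hg : Function.Injective g)
  (hsub : K33.image (Finset.image g) ⊆ K)

include hK hg hsub in
open Classical in
lemma dim_ineq :
    Fintype.card {S : Finset ℕ // S ∈ Vfin K g}
      + Fintype.card {t : TT K // ¬ ((⟦t⟧ : QQ K g).out = t)}
      ≤ Fintype.card {e : Finset ℕ // e ∈ EHset K g} := by
  have hkfam : LinearIndependent (ZMod 2)
      (fun S : {S : Finset ℕ // S ∈ Vfin K g} =>
        (⟨zvec K g S, LinearMap.mem_ker.2 (zvec_ker hK S)⟩ :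
          LinearMap.ker (bd K g))) := by
    apply LinearIndependent.of_comp (LinearMap.ker (bd K g)).subtype
    exact zvec_indep hK hg hsub
  have hk := hkfam.fintype_card_le_finrank
  have hrfam : LinearIndependent (ZMod 2)
      (fun t : {t : TT K // ¬ ((⟦t⟧ : QQ K g).out = t)} =>
        (⟨wvec t, wvec_mem_range hK t⟩ : LinearMap.range (bd K g))) := by
    apply LinearIndependent.of_comp (LinearMap.range (bd K g)).subtype
    exact wvec_indep
  have hr := hrfam.fintype_card_le_finrank
  have hrn := LinearMap.finrank_range_add_finrank_ker (bd K g)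
  rw [Module.finrank_pi] at hrn
  omega

include hg hsub hK in
lemma cVfin : (Vfin K g).card = fv K 0 - 6 ∧ 6 ≤ fv K 0 := by
  have himgsub : (Finset.range 6).image (fun k => ({g k} : Finset ℕ))
      ⊆ K.filter (fun s => s.card = 1) := by
    intro s hs
    obtain ⟨k, hk, rfl⟩ := Finset.mem_image.1 hs
    rw [Finset.mem_range] at hk
    exact Finset.mem_filter.2 ⟨gvert_mem hK hsub hk, by simp⟩
  have himgcard : ((Finset.range 6).image (fun k => ({g k} : Finset ℕ))).card = 6 := by
    rw [Finset.card_image_of_injOn, Finset.card_range]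
    intro a _ b _ hab
    simp only [Finset.singleton_inj] at hab
    exact hg hab
  have hfv : fv K 0 = (K.filter (fun s => s.card = 1)).card := rfl
  constructor
  · rw [Vfin, Finset.card_sdiff_of_subset himgsub, himgcard, hfv]
  · rw [hfv, ← himgcard]
    exact Finset.card_le_card himgsub

include hg hsub hK in
lemma cEH : (EHset K g).card = fv K 1 - 9 ∧ 9 ≤ fv K 1 := by
  have hEGsub : EG g ⊆ K.filter (fun s => s.card = 2) := by
    intro e he
    exact Finset.mem_filter.2 ⟨EG_sub_K hK hsub he, EG_card_two hg he⟩
  have hfv : fv K 1 = (K.filter (fun s => s.card = 2)).card := rfl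
  constructor
  · rw [EHset, Finset.card_sdiff_of_subset hEGsub, EG_card hg, hfv]
  · rw [hfv, ← EG_card hg (g := g)]
    exact Finset.card_le_card hEGsub

lemma cTT : Fintype.card (TT K) = fv K 2 := by
  have h1 : Fintype.card (TT K) = (TriK K).card := Fintype.card_coe (TriK K)
  rw [h1]
  rfl

end Final


/-- `K₃,₃` is not planar: no copy of `K₃,₃` is a subcomplex of any
triangulation of the 2-sphere. -/
theorem K33_not_planar (K : Finset (Finset ℕ)) (hK : TriS2 K)
    (g : ℕ → ℕ) (hg : Function.Injective g) :
    ¬ K33.image (Finset.image g) ⊆ K := by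
  intro hsub
  classical
  have hne := TriK_nonempty hK hg hsub
  have hupper := QQ_card_le4 hK hg hsub hne
  have hdim := dim_ineq hK hg hsub
  have hnonrep := card_nonrep (K := K) (g := g)
  have hV := cVfin hK hg hsub
  have hE := cEH hK hg hsub
  have hT : Fintype.card (TT K) = fv K 2 := cTT
  have hVcoe : Fintype.card {S : Finset ℕ // S ∈ Vfin K g} = (Vfin K g).card :=
    Fintype.card_coe _
  have hEcoe : Fintype.card {e : Finset ℕ // e ∈ EHset K g} = (EHset K g).card :=
    Fintype.card_coe _
  have hEuler := hK.2
  omega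
end

section
/- The boundary complex of the icosahedron has no induced cycle of length congruent to 1 modulo 3. -/
set_option maxRecDepth 100000


/-- The boundary complex of the icosahedron, on the 12 vertices
`0,…,5` and `0' = 6, 1' = 7, …, 5' = 11`, with the 20 triangles
012, 015, 023, 034, 045, 124′, 153′, 13′4′, 235′, 24′5′, 341′, 31′5′, 452′,
41′2′, 52′3′, 0′1′2′, 0′1′5′, 0′2′3′, 0′3′4′, 0′4′5′. -/
def Icosa : Finset (Finset ℕ) :=
  sclosure {{0, 1, 2}, {0, 1, 5}, {0, 2, 3}, {0, 3, 4}, {0, 4, 5},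
            {1, 2, 10}, {1, 5, 9}, {1, 9, 10}, {2, 3, 11}, {2, 10, 11},
            {3, 4, 7}, {3, 7, 11}, {4, 5, 8}, {4, 7, 8}, {5, 8, 9},
            {6, 7, 8}, {6, 7, 11}, {6, 8, 9}, {6, 9, 10}, {6, 10, 11}}

/-- `g 0, …, g (n-1)` is an induced `n`-cycle in the complex `K`: its vertices are
vertices of `K` and the induced subcomplex of `K` on them is exactly the cycle. -/
def IsInducedCycle (K : Finset (Finset ℕ)) (n : ℕ) (g : ℕ → ℕ) : Prop :=
  3 ≤ n ∧ Set.InjOn g (Set.Iio n) ∧ (∀ i < n, ({g i} : Finset ℕ) ∈ K) ∧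
    K.filter (fun s => s ⊆ (Finset.range n).image g) = cycleOn n g

-- auxiliary machinery
def adjb (x y : ℕ) : Bool :=
  (match x with
   | 0 => [1,2,3,4,5] | 1 => [0,2,5,9,10] | 2 => [0,1,3,10,11] | 3 => [0,2,4,7,11]
   | 4 => [0,3,5,7,8] | 5 => [0,1,4,8,9] | 6 => [7,8,9,10,11] | 7 => [3,4,6,8,11]
   | 8 => [4,5,6,7,9] | 9 => [1,5,6,8,10] | 10 => [1,2,6,9,11] | 11 => [2,3,6,7,10]
   | _ => []).contains y

def extList (l : List ℕ) : List (List ℕ) :=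
  match l with
  | [] => []
  | a :: t => ((List.range 12).filter
      (fun w => adjb w a && !(a :: t).contains w && t.all (fun v => !adjb w v))).map
      (fun w => w :: a :: t)

def steps : ℕ → List (List ℕ)
  | 0 => (List.range 12).map (fun v => [v])
  | k+1 => (steps k).flatMap extList

def closeable (l : List ℕ) : Bool :=
  match l with
  | [] => false
  | a :: t => (List.range 12).any
      (fun w => adjb w a && !(a :: t).contains w &&
        t.all (fun v => adjb w v == (v == (a :: t).getLastD 0)))

lemma icosa_sub : ∀ s ∈ Icosa, s ⊆ Finset.range 12 := by decide

lemma adj_iff : ∀ x < 12, ∀ y < 12, x ≠ y →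
    (adjb x y = true ↔ ({x, y} : Finset ℕ) ∈ Icosa) := by decide

lemma adjb_symm : ∀ x < 12, ∀ y < 12, adjb x y = adjb y x := by decide

lemma key2 : (steps 2).all (fun l => !closeable l) = true := by decide
lemma key5 : (steps 5).all (fun l => !closeable l) = true := by decide
lemma key8 : (steps 8).all (fun l => !closeable l) = true := by decide

lemma Pcons (g : ℕ → ℕ) (k : ℕ) :
    (List.range (k+1)).reverse.map g = g k :: (List.range k).reverse.map g := by
  rw [List.range_succ, List.reverse_append]; simp

lemma Pmem (g : ℕ → ℕ) (k : ℕ) (v : ℕ) :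
    v ∈ (List.range k).reverse.map g ↔ ∃ j < k, g j = v := by
  simp [List.mem_map]

lemma Plast (g : ℕ → ℕ) : ∀ k d, ((List.range (k+1)).reverse.map g).getLastD d = g 0 := by
  intro k
  induction k with
  | zero => intro d; rfl
  | succ k ih =>
    intro d
    rw [Pcons, List.getLastD_cons]
    exact ih _

/-- the boundary complex of the icosahedron has no induced cycle of
length congruent to 1 modulo 3. -/
theorem icosa_no_induced_cycle_one_mod_three (n : ℕ) (g : ℕ → ℕ)
    (h : IsInducedCycle Icosa n g) : n % 3 ≠ 1 := by
  obtain ⟨hn3, hinj, hvert, hfilt⟩ := h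
  intro hmod
  have hnpos : 0 < n := by omega
  have hv : ∀ i < n, g i < 12 := by
    intro i hi
    have := icosa_sub _ (hvert i hi) (Finset.mem_singleton_self (g i))
    simpa using this
  have hginj : ∀ i < n, ∀ j < n, g i = g j → i = j := by
    intro i hi j hj hij
    exact hinj (Set.mem_Iio.2 hi) (Set.mem_Iio.2 hj) hij
  have hgne : ∀ i < n, ∀ j < n, i ≠ j → g i ≠ g j := by
    intro i hi j hj hne he; exact hne (hginj i hi j hj he)
  have hedge : ∀ i < n, ({g i, g ((i+1) % n)} : Finset ℕ) ∈ Icosa := by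
    intro i hi
    have hc : ({g i, g ((i+1) % n)} : Finset ℕ) ∈ cycleOn n g :=
      Finset.mem_union_right _ (Finset.mem_image.2 ⟨i, Finset.mem_range.2 hi, rfl⟩)
    rw [← hfilt] at hc
    exact (Finset.mem_filter.1 hc).1
  have hadj : ∀ i < n, (i+1) % n ≠ i → adjb (g i) (g ((i+1) % n)) = true := by
    intro i hi hne
    have hm : (i+1) % n < n := Nat.mod_lt _ hnpos
    exact (adj_iff _ (hv i hi) _ (hv _ hm) (hgne i hi _ hm (Ne.symm hne))).2 (hedge i hi)
  have hchord : ∀ i < n, ∀ j < n, g i ≠ g j → adjb (g i) (g j) = true →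
      j = (i+1) % n ∨ i = (j+1) % n := by
    intro i hi j hj hne hab
    have hmemI : ({g i, g j} : Finset ℕ) ∈ Icosa :=
      (adj_iff _ (hv i hi) _ (hv j hj) hne).1 hab
    have hsubim : ({g i, g j} : Finset ℕ) ⊆ (Finset.range n).image g := by
      intro x hx
      rcases Finset.mem_insert.1 hx with h1 | h1
      · exact Finset.mem_image.2 ⟨i, Finset.mem_range.2 hi, h1.symm⟩
      · exact Finset.mem_image.2 ⟨j, Finset.mem_range.2 hj, (Finset.mem_singleton.1 h1).symm⟩
    have hcyc : ({g i, g j} : Finset ℕ) ∈ cycleOn n g := by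
      rw [← hfilt]; exact Finset.mem_filter.2 ⟨hmemI, hsubim⟩
    rcases Finset.mem_union.1 hcyc with hs | hp
    · exfalso
      obtain ⟨k, _, hkeq⟩ := Finset.mem_image.1 hs
      have h1 : g i ∈ ({g k} : Finset ℕ) := by rw [hkeq]; simp
      have h2 : g j ∈ ({g k} : Finset ℕ) := by rw [hkeq]; simp
      exact hne ((Finset.mem_singleton.1 h1).trans (Finset.mem_singleton.1 h2).symm)
    · obtain ⟨k, hk, hkeq⟩ := Finset.mem_image.1 hp
      have hkn : k < n := Finset.mem_range.1 hk
      have hmn : (k+1) % n < n := Nat.mod_lt _ hnpos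
      have h1 : g i ∈ ({g k, g ((k+1) % n)} : Finset ℕ) := by rw [hkeq]; simp
      have h2 : g j ∈ ({g k, g ((k+1) % n)} : Finset ℕ) := by rw [hkeq]; simp
      simp only [Finset.mem_insert, Finset.mem_singleton] at h1 h2
      rcases h1 with h1 | h1 <;> rcases h2 with h2 | h2
      · exact absurd (h1.trans h2.symm) hne
      · left; rw [hginj i hi k hkn h1]; exact hginj j hj _ hmn h2
      · right; rw [hginj j hj k hkn h2]; exact hginj i hi _ hmn h1
      · exact absurd (h1.trans h2.symm) hne
  -- no chords in Bool form
  have hnochord : ∀ i < n, ∀ j < n, j ≠ (i+1) % n → i ≠ (j+1) % n → i ≠ j →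
      adjb (g i) (g j) = false := by
    intro i hi j hj h1 h2 h3
    cases hab : adjb (g i) (g j) with
    | false => rfl
    | true =>
      rcases hchord i hi j hj (hgne i hi j hj h3) hab with h | h
      · exact absurd h h1
      · exact absurd h h2
  have notcont : ∀ m ≤ n, ∀ i, m ≤ i → i < n →
      ((List.range m).reverse.map g).contains (g i) = false := by
    intro m hm i him hin
    rw [List.contains_eq_any_beq, List.any_eq_false]
    intro v hvm
    obtain ⟨j, hj, rfl⟩ := (Pmem g m (v := v)).1 hvm
    simp only [beq_iff_eq]
    exact fun e => absurd (hginj _ hin _ (by omega) e) (by omega)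
  -- main path induction
  have hpath : ∀ k, k ≤ n - 2 → ((List.range (k+1)).reverse.map g) ∈ steps k := by
    intro k
    induction k with
    | zero =>
      intro _
      show _ ∈ (List.range 12).map (fun v => [v])
      exact List.mem_map.2 ⟨g 0, List.mem_range.2 (hv 0 hnpos), rfl⟩
    | succ k ih =>
      intro hk
      have hkn : k + 1 < n := by omega
      have ihm := ih (by omega)
      show _ ∈ (steps k).flatMap extList
      refine List.mem_flatMap.2 ⟨_, ihm, ?_⟩
      rw [Pcons g (k+1), Pcons g k]
      show _ ∈ extList (g k :: (List.range k).reverse.map g)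
      unfold extList
      refine List.mem_map.2 ⟨g (k+1), List.mem_filter.2 ⟨List.mem_range.2 (hv _ hkn), ?_⟩, rfl⟩
      have e1 : adjb (g (k+1)) (g k) = true := by
        have := hadj k (by omega) (by rw [Nat.mod_eq_of_lt hkn]; omega)
        rw [Nat.mod_eq_of_lt hkn] at this
        rw [adjb_symm _ (hv _ hkn) _ (hv k (by omega))]
        exact this
      have e2 : (g k :: (List.range k).reverse.map g).contains (g (k+1)) = false := by
        rw [← Pcons g k]
        exact notcont (k+1) (by omega) (k+1) le_rfl hkn
      have e3 : ((List.range k).reverse.map g).all (fun v => !adjb (g (k+1)) v) = true := by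
        rw [List.all_eq_true]
        intro v hvm
        obtain ⟨j, hj, rfl⟩ := (Pmem g k (v := v)).1 hvm
        have : adjb (g (k+1)) (g j) = false := by
          refine hnochord (k+1) hkn j (by omega) ?_ ?_ (by omega)
          · rw [Nat.mod_eq_of_lt (by omega : k+1+1 < n)]; omega
          · rw [Nat.mod_eq_of_lt (by omega : j+1 < n)]; omega
        simp [this]
      rw [e1, e2, e3]
      rfl
  -- n is 4, 7 or 10
  have hcard : n ≤ 12 := by
    have hinj' : Set.InjOn g ↑(Finset.range n) := by rw [Finset.coe_range]; exact hinj
    have h1 : ((Finset.range n).image g).card = n := by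
      rw [Finset.card_image_of_injOn hinj', Finset.card_range]
    have h2 : (Finset.range n).image g ⊆ Finset.range 12 := by
      intro x hx
      obtain ⟨i, hi, rfl⟩ := Finset.mem_image.1 hx
      exact Finset.mem_range.2 (hv i (Finset.mem_range.1 hi))
    have := Finset.card_le_card h2
    rw [h1, Finset.card_range] at this
    exact this
  -- the closing vertex shows closeable is true
  have hmem : ((List.range (n-1)).reverse.map g) ∈ steps (n-2) := by
    have : (n - 2) + 1 = n - 1 := by omega
    rw [← this]
    exact hpath (n-2) le_rfl
  have hclose : closeable ((List.range (n-1)).reverse.map g) = true := by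
    have hrw : (n - 3) + 1 = n - 2 := by omega
    rw [show n - 1 = (n-2)+1 by omega, Pcons g (n-2)]
    unfold closeable
    rw [List.any_eq_true]
    refine ⟨g (n-1), List.mem_range.2 (hv _ (by omega)), ?_⟩
    rw [← Pcons g (n-2)]
    have c1 : adjb (g (n-1)) (g (n-2)) = true := by
      have := hadj (n-2) (by omega) (by rw [show n-2+1 = n-1 by omega, Nat.mod_eq_of_lt (by omega)]; omega)
      rw [show n-2+1 = n-1 by omega, Nat.mod_eq_of_lt (by omega)] at this
      rw [adjb_symm _ (hv _ (by omega)) _ (hv _ (by omega))]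
      exact this
    have c2 : ((List.range ((n-2)+1)).reverse.map g).contains (g (n-1)) = false := by
      rw [show (n-2)+1 = n-1 by omega]
      exact notcont (n-1) (by omega) (n-1) le_rfl (by omega)
    have c0 : adjb (g (n-1)) (g 0) = true := by
      have := hadj (n-1) (by omega) (by rw [show n-1+1 = n by omega, Nat.mod_self]; omega)
      rw [show n-1+1 = n by omega, Nat.mod_self] at this
      exact this
    have c3 : ((List.range (n-2)).reverse.map g).all
        (fun v => adjb (g (n-1)) v == (v == ((List.range ((n-2)+1)).reverse.map g).getLastD 0)) = true := by
      rw [List.all_eq_true]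
      intro v hvm
      obtain ⟨j, hj, rfl⟩ := (Pmem g (n-2) (v := v)).1 hvm
      rw [Plast g]
      rcases Nat.eq_zero_or_pos j with rfl | hjpos
      · simp [c0]
      · have d1 : adjb (g (n-1)) (g j) = false := by
          refine hnochord (n-1) (by omega) j (by omega) ?_ ?_ (by omega)
          · rw [show n-1+1 = n by omega, Nat.mod_self]; omega
          · rw [Nat.mod_eq_of_lt (by omega : j+1 < n)]; omega
        have d2 : (g j == g 0) = false :=
          beq_eq_false_iff_ne.2 (hgne j (by omega) 0 hnpos (by omega))
        rw [d1, d2]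
        rfl
    rw [c1, c2, c3]
    rfl
  have hfalse : closeable ((List.range (n-1)).reverse.map g) = false := by
    have h410 : n = 4 ∨ n = 7 ∨ n = 10 := by omega
    rcases h410 with rfl | rfl | rfl
    · have := (List.all_eq_true.1 key2) _ hmem
      simpa using this
    · have := (List.all_eq_true.1 key5) _ hmem
      simpa using this
    · have := (List.all_eq_true.1 key8) _ hmem
      simpa using this
  rw [hclose] at hfalse
  exact absurd hfalse (by simp)
end
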